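/- arXiv:0904.4364 — 5 statements merged into one kernel-verified Lean document; each statement's English description precedes it below -/
import Mathlib

section
/- An event E ⊆ DS is time-superinvariant if and only if it is time-invariant. -/
open MeasureTheory Filter Set
open scoped ENNReal NNReal

noncomputable section

/-- The sample space: continuous functions `[0,∞) → ℝ`. -/
def Omega : Type := {f : ℝ≥0 → ℝ // Continuous f}

instance : CoeFun Omega fun _ => ℝ≥0 → ℝ := ⟨Subtype.val⟩

/-- The filtration `F t`: the smallest σ-algebra making `ω ↦ ω s` measurable for `s ≤ t`. -/
def F (t : ℝ≥0∞) : MeasurableSpace Omega :=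
  ⨆ (s : ℝ≥0) (_ : (s : ℝ≥0∞) ≤ t),
    MeasurableSpace.comap (fun ω : Omega => ω s) inferInstance

lemma F_mono : Monotone F := by
  intro s t hst
  refine iSup_mono fun u => ?_
  exact iSup_le fun hu => le_iSup_of_le (hu.trans hst) le_rfl

instance instMSOmega : MeasurableSpace Omega := F ⊤

/-- The filtration as a Mathlib `Filtration`. -/
def FF : Filtration ℝ≥0∞ instMSOmega where
  seq := F
  mono' := F_mono
  le' := fun t => F_mono le_top

/-- Evaluation of a path at an extended time (times `≥ ∞` are sent to `0`). -/
def evalE (ω : Omega) (t : ℝ≥0∞) : ℝ := ω t.toNNReal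

/-- A simple trading strategy. -/
structure SimpleStrategy where
  τ : ℕ → Omega → ℝ≥0∞
  bet : ℕ → Omega → ℝ
  isStopping : ∀ n, IsStoppingTime FF (fun ω => ((τ n ω : ℝ≥0∞) : WithTop ℝ≥0∞))
  mono : ∀ n ω, τ n ω ≤ τ (n + 1) ω
  tendsto_top : ∀ ω, Tendsto (fun n => τ n ω) atTop (nhds ⊤)
  bet_measurable : ∀ n, Measurable[(isStopping n).measurableSpace] (bet n)
  bet_bounded : ∀ n, ∃ C : ℝ, ∀ ω, |bet n ω| ≤ C

/-- The simple capital process of a simple trading strategy with initial capital `c`. -/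
def simpleCapital (G : SimpleStrategy) (c : ℝ) (t : ℝ≥0) (ω : Omega) : ℝ :=
  c + ∑' n : ℕ, G.bet n ω *
    (evalE ω (G.τ (n + 1) ω ⊓ (t : ℝ≥0∞)) - evalE ω (G.τ n ω ⊓ (t : ℝ≥0∞)))

/-- A positive capital process: a countable sum of nonnegative simple capital processes. -/
structure PositiveCapital where
  G : ℕ → SimpleStrategy
  c : ℕ → ℝ
  c_nonneg : ∀ n, 0 ≤ c n
  c_summable : Summable c
  nonneg : ∀ n (t : ℝ≥0) ω, 0 ≤ simpleCapital (G n) (c n) t ω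

/-- Value of a positive capital process at time `t` on path `ω`. -/
def PositiveCapital.val (S : PositiveCapital) (t : ℝ≥0) (ω : Omega) : ℝ≥0∞ :=
  ∑' n : ℕ, ENNReal.ofReal (simpleCapital (S.G n) (S.c n) t ω)

/-- Initial value of a positive capital process. -/
def PositiveCapital.init (S : PositiveCapital) : ℝ≥0∞ :=
  ∑' n : ℕ, ENNReal.ofReal (S.c n)

/-- Outer content of a set of paths. -/
def outerContent (E : Set Omega) : ℝ≥0∞ :=
  ⨅ (S : PositiveCapital)
    (_ : ∀ ω ∈ E, 1 ≤ liminf (fun t : ℝ≥0 => S.val t ω) atTop), S.init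

/-- Restricted outer content. -/
def outerContentOn (E B : Set Omega) : ℝ≥0∞ := outerContent (E ∩ B)

/-- Restricted inner content. -/
def innerContentOn (E B : Set Omega) : ℝ≥0∞ := 1 - outerContentOn Eᶜ B

/-- A time change: continuous, increasing, starting at `0`. -/
structure TimeChange where
  f : ℝ≥0 → ℝ≥0
  continuous : Continuous f
  monotone : Monotone f
  map_zero : f 0 = 0

/-- Action of a time change on a path. -/
def TimeChange.act (g : TimeChange) (ω : Omega) : Omega :=
  ⟨fun t => ω (g.f t), ω.2.comp g.continuous⟩

/-- A set of paths is time-superinvariant if `ω∘f ∈ E` implies `ω ∈ E` for all time changes. -/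
def TimeSuperinvariant (E : Set Omega) : Prop :=
  ∀ (ω : Omega) (g : TimeChange), g.act ω ∈ E → ω ∈ E

/-- `P` is the Wiener measure started at `c`. -/
def IsWiener (c : ℝ) (P : Measure Omega) : Prop :=
  IsProbabilityMeasure P ∧
  P {ω : Omega | ω 0 = c} = 1 ∧
  ∀ s t : ℝ≥0, s < t →
    ProbabilityTheory.Indep (F s)
      (MeasurableSpace.comap (fun ω : Omega => ω t - ω s) inferInstance) P ∧
    P.map (fun ω : Omega => ω t - ω s) = ProbabilityTheory.gaussianReal 0 (t - s)


def NowhereConstant (ω : Omega) : Prop :=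
  ∀ t₁ t₂ : ℝ≥0, t₁ < t₂ → ∃ s₁ ∈ Set.Ioo t₁ t₂, ∃ s₂ ∈ Set.Ioo t₁ t₂, ω s₁ ≠ ω s₂

/-- `ω` is divergent: it has no finite limit at infinity. -/
def Divergent (ω : Omega) : Prop :=
  ¬ ∃ c : ℝ, Tendsto (fun t => ω t) atTop (nhds c)

/-- The divergent and nowhere constant paths. -/
def DS : Set Omega := {ω | Divergent ω ∧ NowhereConstant ω}

/-- `ω` is constant on `[u,v]`. -/
def ConstOn (ω : Omega) (u v : ℝ≥0) : Prop := ∀ s ∈ Set.Icc u v, ω s = ω u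

/-- `t` is a point of increase of `ω`. -/
def PointOfIncrease (ω : Omega) (t : ℝ≥0) : Prop :=
  ∃ δ : ℝ≥0, 0 < δ ∧ ∀ t₁ t₂ : ℝ≥0, t - δ < t₁ → t₁ < t → t < t₂ → t₂ < t + δ →
    ω t₁ ≤ ω t ∧ ω t ≤ ω t₂

/-- `t` is a point of decrease of `ω`. -/
def PointOfDecrease (ω : Omega) (t : ℝ≥0) : Prop :=
  ∃ δ : ℝ≥0, 0 < δ ∧ ∀ t₁ t₂ : ℝ≥0, t - δ < t₁ → t₁ < t → t < t₂ → t₂ < t + δ →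
    ω t₁ ≥ ω t ∧ ω t ≥ ω t₂

/-- `ω` is locally constant to the right of `t`. -/
def LocallyConstantRight (ω : Omega) (t : ℝ≥0) : Prop :=
  ∃ δ : ℝ≥0, 0 < δ ∧ ∀ s ∈ Set.Icc t (t + δ), ω s = ω t

/-- The `p`-variation of `ω` over `[u,v]`. -/
def pVar (ω : Omega) (u v : ℝ≥0) (p : ℝ) : ℝ≥0∞ :=
  ⨆ (n : ℕ) (t : ℕ → ℝ≥0) (_ : Monotone t) (_ : t 0 = u) (_ : t n = v),
    ∑ i ∈ Finset.range n, ENNReal.ofReal (|ω (t (i + 1)) - ω (t i)| ^ p)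

/-- `ln* u = max(1, |ln u|)`. -/
def lnStar (u : ℝ) : ℝ := max 1 |Real.log u|

/-- Taylor's function `ψ(u) = u²/(2 ln* ln* u)`, with `ψ(0)=0`. -/
def taylorPsi (u : ℝ) : ℝ := if u = 0 then 0 else u ^ 2 / (2 * lnStar (lnStar u))

/-- The `φ`-variation of `ω` over `[0,T]`. -/
def phiVar (φ : ℝ → ℝ) (T : ℝ≥0) (ω : Omega) : ℝ≥0∞ :=
  ⨆ (n : ℕ) (t : ℕ → ℝ≥0) (_ : Monotone t) (_ : t 0 = 0) (_ : t n = T),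
    ∑ i ∈ Finset.range n, ENNReal.ofReal (φ |ω (t (i + 1)) - ω (t i)|)

/-- Taylor's quadratic variation `qvar_T(ω)`. -/
def qvar (T : ℝ≥0) (ω : Omega) : ℝ≥0∞ :=
  ⨅ (δ : ℝ) (_ : 0 < δ),
    ⨆ (n : ℕ) (t : ℕ → ℝ≥0) (_ : Monotone t) (_ : t 0 = 0) (_ : t n = T)
      (_ : ∀ i < n, (t (i + 1) : ℝ) - t i < δ),
      ∑ i ∈ Finset.range n, ENNReal.ofReal (taylorPsi |ω (t (i + 1)) - ω (t i)|)


/-- The dyadic grid `D_n`. -/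
def grid (n : ℕ) : Set ℝ := {x | ∃ k : ℤ, x = k * (2 : ℝ) ^ (-(n : ℤ))}

/-- Hitting times of the grid `D_n`: `hitT n k` is `T^n_{k-1}` of the paper (so `hitT n 0 = 0`). -/
def hitT (n : ℕ) : ℕ → Omega → ℝ≥0∞
  | 0, _ => 0
  | 1, ω => ⨅ (t : ℝ≥0) (_ : ω t ∈ grid n), (t : ℝ≥0∞)
  | (k + 2), ω =>
      ⨅ (t : ℝ≥0) (_ : hitT n (k + 1) ω ≤ (t : ℝ≥0∞) ∧ ω t ∈ grid n ∧
          ω t ≠ evalE ω (hitT n (k + 1) ω)), (t : ℝ≥0∞)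

/-- The approximating quadratic variation process `A^n_t`. -/
def Aproc (n : ℕ) (t : ℝ≥0) (ω : Omega) : ℝ≥0∞ :=
  ∑' k : ℕ, ENNReal.ofReal
    ((evalE ω (hitT n (k + 1) ω ⊓ (t : ℝ≥0∞)) - evalE ω (hitT n k ω ⊓ (t : ℝ≥0∞))) ^ 2)

/-- `Ā_t`. -/
def upA (t : ℝ≥0) (ω : Omega) : ℝ≥0∞ := limsup (fun n => Aproc n t ω) atTop

/-- `A̲_t`. -/
def lowA (t : ℝ≥0) (ω : Omega) : ℝ≥0∞ := liminf (fun n => Aproc n t ω) atTop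

/-- The stopping times `τ_s` used for the normalizing time change. -/
def tauQ (s : ℝ≥0) (ω : Omega) : ℝ≥0∞ :=
  ⨅ (t : ℝ≥0) (_ : (∀ u : ℝ≥0, u < t → upA u ω = lowA u ω ∧ upA u ω ≠ ⊤) ∧
      ContinuousOn (fun u : ℝ≥0 => (upA u ω).toReal) (Set.Iio t) ∧
      (⨆ u ∈ Set.Iio t, upA u ω) = (⨆ u ∈ Set.Iio t, lowA u ω) ∧
      (s : ℝ≥0∞) ≤ ⨆ u ∈ Set.Iio t, upA u ω),
    (t : ℝ≥0∞)

/-- The normalizing time change applied to `ω` (with `ω(∞) := 0`). -/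
def ntMap (ω : Omega) : ℝ≥0 → ℝ :=
  fun s => if tauQ s ω = ⊤ then 0 else ω (tauQ s ω).toNNReal

/-- Preimage of a set of paths under the normalizing time change. -/
def ntPre (E : Set Omega) : Set Omega :=
  {ω | ∃ hc : Continuous (ntMap ω), (⟨ntMap ω, hc⟩ : Omega) ∈ E}

/-- The event `A_∞ = ∞`. -/
def AInfty : Set Omega :=
  {ω | (∀ t : ℝ≥0, upA t ω = lowA t ω) ∧ Tendsto (fun t : ℝ≥0 => upA t ω) atTop (nhds ⊤)}



/-- A set of paths is time-invariant if it is closed under the action of all unbounded strictly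
increasing time changes. -/
def TimeInvariant (E : Set Omega) : Prop :=
  ∀ ω ∈ E, ∀ g : TimeChange, StrictMono g.f → Tendsto g.f atTop atTop → g.act ω ∈ E


lemma inverse_time_change (g : TimeChange) (hs : StrictMono g.f)
    (ht : Tendsto g.f atTop atTop) :
    ∃ h : TimeChange, StrictMono h.f ∧ Tendsto h.f atTop atTop ∧
      ∀ t, g.f (h.f t) = t := by
  have hsurj : Function.Surjective g.f := by
    intro y
    obtain ⟨a, ha⟩ := (ht.eventually (eventually_ge_atTop y)).exists
    have h0 : g.f 0 ≤ y := by rw [g.map_zero]; exact zero_le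
    obtain ⟨x, -, hx⟩ := intermediate_value_Icc (zero_le : (0 : ℝ≥0) ≤ a) g.continuous.continuousOn
      (⟨h0, ha⟩ : y ∈ Set.Icc (g.f 0) (g.f a))
    exact ⟨x, hx⟩
  set e := StrictMono.orderIsoOfSurjective g.f hs hsurj with he
  refine ⟨⟨e.symm, e.symm.continuous, e.symm.monotone, ?_⟩, e.symm.strictMono,
    tendsto_atTop_atTop_of_monotone e.symm.monotone (fun b => ⟨g.f b, by
      simp [he, StrictMono.orderIsoOfSurjective_symm_apply_self]⟩), fun t => ?_⟩
  · have h2 : e.symm (g.f 0) = 0 := StrictMono.orderIsoOfSurjective_symm_apply_self g.f hs hsurj 0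
    rwa [g.map_zero] at h2
  · exact StrictMono.orderIsoOfSurjective_self_symm_apply g.f hs hsurj t

/-- An event `E ⊆ DS` is time-superinvariant iff it is time-invariant. -/
theorem timeSuperinvariant_iff_timeInvariant (E : Set Omega) (hE : E ⊆ DS) :
    TimeSuperinvariant E ↔ TimeInvariant E := by

  constructor
  · intro hSup ω hω g hgs hgt
    obtain ⟨h, -, -, hinv⟩ := inverse_time_change g hgs hgt
    refine hSup (g.act ω) h ?_
    have : h.act (g.act ω) = ω := by
      apply Subtype.ext; funext t
      show ω (g.f (h.f t)) = ω t
      rw [hinv]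
    rwa [this]
  · intro hInv ω g hgω
    have hDS := hE hgω
    have hgs : StrictMono g.f := by
      intro a b hab
      rcases lt_or_eq_of_le (g.monotone hab.le) with h | h
      · exact h
      · exfalso
        obtain ⟨s₁, hs₁, s₂, hs₂, hne⟩ := hDS.2 a b hab
        apply hne
        have e1 : g.f s₁ = g.f a :=
          le_antisymm (h ▸ g.monotone hs₁.2.le) (g.monotone hs₁.1.le)
        have e2 : g.f s₂ = g.f a :=
          le_antisymm (h ▸ g.monotone hs₂.2.le) (g.monotone hs₂.1.le)
        show ω (g.f s₁) = ω (g.f s₂)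
        rw [e1, e2]
    have hgt : Tendsto g.f atTop atTop := by
      refine tendsto_atTop_atTop_of_monotone g.monotone ?_
      intro b
      by_contra hb
      push_neg at hb
      have hbdd : BddAbove (Set.range g.f) := ⟨b, by rintro x ⟨t, rfl⟩; exact (hb t).le⟩
      have hlim : Tendsto g.f atTop (nhds (⨆ t, g.f t)) :=
        tendsto_atTop_ciSup g.monotone hbdd
      exact hDS.1 ⟨ω (⨆ t, g.f t), (ω.2.tendsto _).comp hlim⟩
    obtain ⟨h, hhs, hht, hinv⟩ := inverse_time_change g hgs hgt
    have key := hInv (g.act ω) hgω h hhs hht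
    have : h.act (g.act ω) = ω := by
      apply Subtype.ext; funext t
      show ω (g.f (h.f t)) = ω t
      rw [hinv]
    rwa [this] at key

end
end

section
/- An event E ⊆ DS is time-superinvariant if and only if DS \ E is time-superinvariant. -/
open MeasureTheory Filter Set
open scoped ENNReal NNReal

noncomputable section

/-- Key lemma: if `g.act ω ∈ DS`, then `ω ∈ DS` and `g` has an inverse time change. -/
lemma key_inv_aux (ω : Omega) (g : TimeChange) (hν : g.act ω ∈ DS) :
    ω ∈ DS ∧ ∃ h : TimeChange, h.act (g.act ω) = ω := by
  obtain ⟨hdiv, hnc⟩ := hν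
  have hsm : StrictMono g.f := by
    intro a b hab
    rcases lt_or_eq_of_le (g.monotone hab.le) with h | h
    · exact h
    · exfalso
      obtain ⟨s₁, hs₁, s₂, hs₂, hne⟩ := hnc a b hab
      apply hne
      have e1 : g.f s₁ = g.f a :=
        le_antisymm (h ▸ g.monotone hs₁.2.le) (g.monotone hs₁.1.le)
      have e2 : g.f s₂ = g.f a :=
        le_antisymm (h ▸ g.monotone hs₂.2.le) (g.monotone hs₂.1.le)
      show ω (g.f s₁) = ω (g.f s₂)
      rw [e1, e2]
  have htop : Tendsto g.f atTop atTop := by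
    by_contra hbd
    have hb : BddAbove (Set.range g.f) := by
      by_contra hb
      exact hbd (tendsto_atTop_atTop_of_monotone' g.monotone hb)
    have hlim := tendsto_atTop_ciSup g.monotone hb
    exact hdiv ⟨ω (⨆ t, g.f t), (ω.2.tendsto _).comp hlim⟩
  have hsurj : Function.Surjective g.f := by
    intro y
    obtain ⟨t, ht⟩ := (htop.eventually (eventually_ge_atTop y)).exists
    have hy : y ∈ Set.Icc (g.f 0) (g.f t) := ⟨by simp [g.map_zero], ht⟩
    obtain ⟨x, _, hx⟩ := intermediate_value_Icc (zero_le : (0 : ℝ≥0) ≤ t) g.continuous.continuousOn hy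
    exact ⟨x, hx⟩
  let e : ℝ≥0 ≃o ℝ≥0 := StrictMono.orderIsoOfSurjective g.f hsm hsurj
  have he : ∀ x, e x = g.f x := fun x => rfl
  have hφ0 : e.symm 0 = 0 := by
    rw [OrderIso.symm_apply_eq, he, g.map_zero]
  have hinv : ∀ t, g.f (e.symm t) = t := fun t => by
    rw [← he]; exact e.apply_symm_apply t
  refine ⟨⟨?_, ?_⟩, ⟨fun t => e.symm t, e.symm.continuous, e.symm.monotone, hφ0⟩, ?_⟩
  · rintro ⟨c, hc⟩
    exact hdiv ⟨c, hc.comp htop⟩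
  · intro t₁ t₂ h12
    obtain ⟨s₁, hs₁, s₂, hs₂, hne⟩ := hnc _ _ (e.symm.strictMono h12)
    refine ⟨g.f s₁, ⟨?_, ?_⟩, g.f s₂, ⟨?_, ?_⟩, hne⟩
    · exact (hinv t₁) ▸ hsm hs₁.1
    · exact (hinv t₂) ▸ hsm hs₁.2
    · exact (hinv t₁) ▸ hsm hs₂.1
    · exact (hinv t₂) ▸ hsm hs₂.2
  · exact Subtype.ext (funext fun t => by
      show ω (g.f (e.symm t)) = ω t
      rw [hinv])

/-- An event `E ⊆ DS` is time-superinvariant iff `DS \ E` is time-superinvariant. -/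
theorem timeSuperinvariant_iff_diff_timeSuperinvariant (E : Set Omega) (hE : E ⊆ DS) :
    TimeSuperinvariant E ↔ TimeSuperinvariant (DS \ E) := by
  constructor
  · intro hEsi ω g hmem
    obtain ⟨hωDS, h, hh⟩ := key_inv_aux ω g hmem.1
    refine ⟨hωDS, fun hωE => hmem.2 ?_⟩
    exact hEsi (g.act ω) h (by rw [hh]; exact hωE)
  · intro hDsi ω g hmem
    obtain ⟨hωDS, h, hh⟩ := key_inv_aux ω g (hE hmem)
    by_contra hωE
    exact (hDsi (g.act ω) h (by rw [hh]; exact ⟨hωDS, hωE⟩)).2 hmem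
end
end

section
/- Let T ∈ [0,∞), ω ∈ Ω, and let f be a time change. Then qvar_T(ω∘f) = qvar_{f(T)}(ω). -/
open MeasureTheory Filter Set
open scoped ENNReal NNReal

noncomputable section

namespace QvarAux

lemma taylorPsi_le {x K : ℝ} (hK : 0 ≤ K) (h : |x| ≤ K) : taylorPsi |x| ≤ K^2/2 := by
  unfold taylorPsi
  split_ifs with h0
  · positivity
  · have h1 : (1:ℝ) ≤ lnStar (lnStar |x|) := le_max_left _ _
    have h2 : |x|^2 / (2 * lnStar (lnStar |x|)) ≤ |x|^2 / 2 := by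
      apply div_le_div_of_nonneg_left (by positivity) (by norm_num) (by linarith)
    have h3 : |x|^2 ≤ K^2 := by
      have := abs_nonneg x
      nlinarith
    nlinarith

def psum (W : ℝ≥0 → ℝ) (u : ℕ → ℝ≥0) (m : ℕ) : ℝ≥0∞ :=
  ∑ i ∈ Finset.range m, ENNReal.ofReal (taylorPsi |W (u (i + 1)) - W (u i)|)

lemma discrete_ivt {u : ℕ → ℝ≥0} {m : ℕ} (hm : 0 < m) {c : ℝ≥0}
    (h0 : u 0 ≤ c) (hc : c ≤ u m) : ∃ p < m, u p ≤ c ∧ c ≤ u (p+1) := by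
  induction m with
  | zero => omega
  | succ k ih =>
    by_cases hk : u k ≤ c
    · exact ⟨k, Nat.lt_succ_self k, hk, hc⟩
    · push_neg at hk
      rcases Nat.eq_zero_or_pos k with h | h
      · subst h; exact absurd h0 (not_le.mpr hk)
      · obtain ⟨p, hp, h1, h2⟩ := ih h hk.le
        exact ⟨p, hp.trans (Nat.lt_succ_self k), h1, h2⟩

lemma f_sInf {f : ℝ≥0 → ℝ≥0} (hcont : Continuous f) (hmono : Monotone f) (hf0 : f 0 = 0)
    {T r : ℝ≥0} (hr : r ≤ f T) :
    f (sInf {t | r ≤ f t}) = r ∧ sInf {t | r ≤ f t} ≤ T := by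
  set S := {t | r ≤ f t} with hS
  have hne : S.Nonempty := ⟨T, hr⟩
  have hbdd : BddBelow S := OrderBot.bddBelow S
  have hclosed : IsClosed S := isClosed_le continuous_const hcont
  have hmem : sInf S ∈ S := hclosed.csInf_mem hne hbdd
  have hle : sInf S ≤ T := csInf_le hbdd hr
  refine ⟨le_antisymm ?_ hmem, hle⟩
  rcases eq_or_ne (sInf S) 0 with h0 | h0
  · rw [h0, hf0]; exact zero_le
  · by_contra hgt
    push_neg at hgt
    have hopen : IsOpen {x : ℝ≥0 | r < f x} := isOpen_lt continuous_const hcont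
    have hx : sInf S ∈ {x : ℝ≥0 | r < f x} := hgt
    have hnb : {x : ℝ≥0 | r < f x} ∈ nhdsWithin (sInf S) (Set.Iio (sInf S)) :=
      mem_nhdsWithin_of_mem_nhds (hopen.mem_nhds hx)
    have hpos : (0:ℝ≥0) < sInf S := lt_of_le_of_ne zero_le (Ne.symm h0)
    have : (Set.Iio (sInf S)).Nonempty := ⟨0, hpos⟩
    have hne' : (nhdsWithin (sInf S) (Set.Iio (sInf S))).NeBot := nhdsWithin_Iio_self_neBot' this
    obtain ⟨t, ht⟩ := Filter.nonempty_of_mem (Filter.inter_mem hnb self_mem_nhdsWithin)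
    have htS : t ∈ S := by simp only [hS, Set.mem_setOf_eq]; exact le_of_lt ht.1
    exact absurd (csInf_le hbdd htS) (not_le.mpr ht.2)


lemma insert_point (W : ℝ≥0 → ℝ) (φ : ℝ≥0 → ℝ≥0) (hφ : Monotone φ)
    (B : ℝ≥0) (δ' K : ℝ) (hK : 0 ≤ K)
    (HK : ∀ a b : ℝ≥0, a ≤ b → b ≤ B → (φ b : ℝ) - φ a < δ' → |W b - W a| ≤ K)
    (m : ℕ) (u : ℕ → ℝ≥0) (hu : Monotone u) (h0 : u 0 = 0) (hm : u m = B)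
    (hmesh : ∀ i < m, (φ (u (i+1)) : ℝ) - φ (u i) < δ')
    (c : ℝ≥0) (hc : c ≤ B) (hδ' : 0 < δ') :
    ∃ u' : ℕ → ℝ≥0, Monotone u' ∧ u' 0 = 0 ∧ u' (m+1) = B ∧
      (∀ i < m+1, (φ (u' (i+1)) : ℝ) - φ (u' i) < δ') ∧
      (∀ i ≤ m, ∃ k ≤ m+1, u' k = u i) ∧ (∃ k ≤ m+1, u' k = c) ∧
      psum W u m ≤ psum W u' (m+1) + ENNReal.ofReal (K^2/2) := by
  rcases Nat.eq_zero_or_pos m with hm0 | hmpos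
  · subst hm0
    have hB : B = 0 := by rw [← hm, h0]
    have hc0 : c = 0 := le_antisymm (hB ▸ hc) (zero_le : (0:ℝ≥0) ≤ c)
    refine ⟨fun _ => 0, monotone_const, rfl, by rw [hB], ?_, ?_, ?_, ?_⟩
    · intro i _; simp [hδ']
    · intro i hi; interval_cases i; exact ⟨0, by omega, h0.symm⟩
    · exact ⟨0, by omega, hc0.symm⟩
    · simp [psum]
  obtain ⟨p, hp, hpc, hcp⟩ := discrete_ivt hmpos (h0 ▸ (zero_le : (0:ℝ≥0) ≤ c)) (hm ▸ hc)
  set u' : ℕ → ℝ≥0 := fun i => if i ≤ p then u i else if i = p+1 then c else u (i-1) with hu'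
  have hval : ∀ i, i ≤ p → u' i = u i := by intro i hi; simp [hu', hi]
  have hvalc : u' (p+1) = c := by simp [hu']
  have hval2 : ∀ i, p+1 < i → u' i = u (i-1) := by
    intro i hi; simp only [hu']; rw [if_neg (by omega), if_neg (by omega)]
  have hmono : Monotone u' := by
    apply monotone_nat_of_le_succ
    intro i
    rcases lt_trichotomy i p with h | h | h
    · rw [hval i h.le, hval (i+1) h]; exact hu (Nat.le_succ i)
    · subst h; rw [hval i le_rfl, hvalc]; exact hpc
    · by_cases h' : i = p + 1
      · subst h'; rw [hvalc, hval2 (p+1+1) (by omega)]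
        simpa using hcp
      · rw [hval2 i (by omega), hval2 (i+1) (by omega)]
        exact hu (by omega)
  have h0' : u' 0 = 0 := by rw [hval 0 (Nat.zero_le p)]; exact h0
  have hB' : u' (m+1) = B := by rw [hval2 (m+1) (by omega)]; simpa using hm
  have hmesh' : ∀ i < m+1, (φ (u' (i+1)) : ℝ) - φ (u' i) < δ' := by
    intro i hi
    rcases lt_trichotomy i p with h | h | h
    · rw [hval i h.le, hval (i+1) h]; exact hmesh i (by omega)
    · subst h
      rw [hval i le_rfl, hvalc]
      have : (φ c : ℝ) ≤ φ (u (i+1)) := by exact_mod_cast hφ hcp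
      have := hmesh i (by omega)
      linarith
    · by_cases h' : i = p + 1
      · subst h'
        rw [hvalc, hval2 (p+1+1) (by omega)]
        have h2 : (φ (u p) : ℝ) ≤ φ c := by exact_mod_cast hφ hpc
        have h3 := hmesh p (by omega)
        simp only [Nat.add_sub_cancel]
        linarith
      · rw [hval2 i (by omega), hval2 (i+1) (by omega)]
        have : i - 1 < m := by omega
        have := hmesh (i-1) this
        have e1 : i - 1 + 1 = i := by omega
        rw [e1] at this
        have e2 : i + 1 - 1 = i := by omega
        rw [e2]
        exact this
  have hpres : ∀ i ≤ m, ∃ k ≤ m+1, u' k = u i := by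
    intro i hi
    rcases le_or_gt i p with h | h
    · exact ⟨i, by omega, hval i h⟩
    · refine ⟨i+1, by omega, ?_⟩
      rw [hval2 (i+1) (by omega)]; simp
  refine ⟨u', hmono, h0', hB', hmesh', hpres, ⟨p+1, by omega, hvalc⟩, ?_⟩
  -- sum inequality
  have hKp : ENNReal.ofReal (taylorPsi |W (u (p+1)) - W (u p)|) ≤ ENNReal.ofReal (K^2/2) := by
    apply ENNReal.ofReal_le_ofReal
    apply taylorPsi_le hK
    exact HK (u p) (u (p+1)) (hu (Nat.le_succ p)) (hm ▸ hu (by omega)) (hmesh p hp)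
  set F : ℕ → ℝ≥0∞ := fun i => ENNReal.ofReal (taylorPsi |W (u (i + 1)) - W (u i)|) with hF
  set G : ℕ → ℝ≥0∞ := fun i => ENNReal.ofReal (taylorPsi |W (u' (i + 1)) - W (u' i)|) with hG
  have hFG1 : ∀ i < p, F i = G i := by
    intro i hi; simp only [hF, hG, hval i (by omega), hval (i+1) (by omega)]
  have hFG2 : ∀ i, p < i → F i = G (i+1) := by
    intro i hi
    simp only [hF, hG]
    rw [hval2 (i+1+1) (by omega), hval2 (i+1) (by omega)]
    simp
  have split1 : psum W u m = (∑ i ∈ Finset.range p, F i) + ∑ i ∈ Finset.Ico p m, F i := by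
    rw [psum, Finset.range_eq_Ico, ← Finset.sum_Ico_consecutive _ (Nat.zero_le p) (by omega), ← Finset.range_eq_Ico]
  have split2 : psum W u' (m+1) =
      (∑ i ∈ Finset.range p, G i) + ∑ i ∈ Finset.Ico p (m+1), G i := by
    rw [psum, Finset.range_eq_Ico, ← Finset.sum_Ico_consecutive _ (Nat.zero_le p) (by omega), ← Finset.range_eq_Ico]
  have peel1 : ∑ i ∈ Finset.Ico p m, F i = F p + ∑ i ∈ Finset.Ico (p+1) m, F i :=
    Finset.sum_eq_sum_Ico_succ_bot hp F
  have peel2 : ∑ i ∈ Finset.Ico p (m+1), G i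
      = G p + (G (p+1) + ∑ i ∈ Finset.Ico (p+2) (m+1), G i) := by
    rw [Finset.sum_eq_sum_Ico_succ_bot (by omega) G,
        Finset.sum_eq_sum_Ico_succ_bot (by omega) G]
  have reindex : ∑ i ∈ Finset.Ico (p+1) m, F i = ∑ i ∈ Finset.Ico (p+2) (m+1), G i := by
    rw [Finset.sum_Ico_eq_sum_range, Finset.sum_Ico_eq_sum_range]
    have he : m + 1 - (p + 2) = m - (p+1) := by omega
    rw [he]
    apply Finset.sum_congr rfl
    intro i _
    have h1 : p + 1 + i + 1 = p + 2 + i := by omega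
    rw [hFG2 (p+1+i) (by omega), h1]
  have sumFG : ∑ i ∈ Finset.range p, F i = ∑ i ∈ Finset.range p, G i :=
    Finset.sum_congr rfl fun i hi => hFG1 i (Finset.mem_range.mp hi)
  calc psum W u m
      = (∑ i ∈ Finset.range p, G i) + (F p + ∑ i ∈ Finset.Ico (p+2) (m+1), G i) := by
        rw [split1, peel1, reindex, sumFG]
    _ ≤ (∑ i ∈ Finset.range p, G i) +
        (ENNReal.ofReal (K^2/2) + ∑ i ∈ Finset.Ico (p+2) (m+1), G i) := by
        gcongr
    _ = ((∑ i ∈ Finset.range p, G i) + ∑ i ∈ Finset.Ico (p+2) (m+1), G i)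
        + ENNReal.ofReal (K^2/2) := by ring
    _ ≤ ((∑ i ∈ Finset.range p, G i) + (G p + (G (p+1) + ∑ i ∈ Finset.Ico (p+2) (m+1), G i)))
        + ENNReal.ofReal (K^2/2) := by
        gcongr
        exact (self_le_add_left _ _).trans (self_le_add_left _ _)
    _ = psum W u' (m+1) + ENNReal.ofReal (K^2/2) := by rw [split2, peel2]

lemma insert_points (W : ℝ≥0 → ℝ) (φ : ℝ≥0 → ℝ≥0) (hφ : Monotone φ)
    (B : ℝ≥0) (δ' K : ℝ) (hK : 0 ≤ K)
    (HK : ∀ a b : ℝ≥0, a ≤ b → b ≤ B → (φ b : ℝ) - φ a < δ' → |W b - W a| ≤ K)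
    (hδ' : 0 < δ') (r : ℕ) (cs : ℕ → ℝ≥0) (hcs : ∀ j < r, cs j ≤ B) :
    ∀ (m : ℕ) (u : ℕ → ℝ≥0), Monotone u → u 0 = 0 → u m = B →
      (∀ i < m, (φ (u (i+1)) : ℝ) - φ (u i) < δ') →
    ∃ u' : ℕ → ℝ≥0, Monotone u' ∧ u' 0 = 0 ∧ u' (m+r) = B ∧
      (∀ i < m+r, (φ (u' (i+1)) : ℝ) - φ (u' i) < δ') ∧
      (∀ j < r, ∃ k ≤ m+r, u' k = cs j) ∧
      psum W u m ≤ psum W u' (m+r) + r * ENNReal.ofReal (K^2/2) := by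
  induction r with
  | zero =>
    intro m u hu h0 hm hmesh
    exact ⟨u, hu, h0, hm, hmesh, by omega, by simp⟩
  | succ r ih =>
    intro m u hu h0 hm hmesh
    obtain ⟨v, hv, hv0, hvB, hvmesh, hvcont, hvsum⟩ :=
      ih (fun j hj => hcs j (by omega)) m u hu h0 hm hmesh
    obtain ⟨w, hw, hw0, hwB, hwmesh, hwpres, hwc, hwsum⟩ :=
      insert_point W φ hφ B δ' K hK HK (m+r) v hv hv0 hvB hvmesh (cs r)
        (hcs r (by omega)) hδ'
    refine ⟨w, hw, hw0, by rw [show m+(r+1) = m+r+1 from by omega]; exact hwB,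
      by rw [show m+(r+1) = m+r+1 from by omega]; exact hwmesh, ?_, ?_⟩
    · intro j hj
      rcases Nat.lt_or_ge j r with h | h
      · obtain ⟨k, hk, hkval⟩ := hvcont j h
        obtain ⟨k', hk', hkval'⟩ := hwpres k hk
        exact ⟨k', by omega, by rw [hkval', hkval]⟩
      · have : j = r := by omega
        subst this
        obtain ⟨k, hk, hkval⟩ := hwc
        exact ⟨k, by omega, hkval⟩
    · push_cast
      calc psum W u m ≤ psum W v (m+r) + r * ENNReal.ofReal (K^2/2) := hvsum
        _ ≤ (psum W w (m+r+1) + ENNReal.ofReal (K^2/2)) + r * ENNReal.ofReal (K^2/2) := by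
            gcongr
        _ = psum W w (m+(r+1)) + ((r:ℝ≥0∞)+1) * ENNReal.ofReal (K^2/2) := by
            rw [show m+(r+1) = m+r+1 from by omega]
            ring

lemma mesh_of_grid {N : ℕ} (hN : 0 < N) (T : ℝ≥0) {len : ℕ} {u : ℕ → ℝ≥0}
    (hu : Monotone u) (hend : u len = T)
    (hgrid : ∀ j ≤ N, ∃ k, u k = (j : ℝ≥0) * T / (N : ℝ≥0)) :
    ∀ i < len, (u (i+1) : ℝ) - u i ≤ (T : ℝ) / N := by
  intro i hi
  by_contra hcon
  push_neg at hcon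
  set a : ℝ := (u i : ℝ) with ha
  set b : ℝ := (u (i+1) : ℝ) with hb
  have ha0 : 0 ≤ a := (u i).2
  have hbT : b ≤ (T : ℝ) := by
    exact_mod_cast NNReal.coe_le_coe.mpr (hend ▸ hu (by omega : i + 1 ≤ len))
  have hNR : (0:ℝ) < (N:ℝ) := by exact_mod_cast hN
  have hT : (0:ℝ) < (T:ℝ) := by
    by_contra hT0
    push_neg at hT0
    have hT0' : (T:ℝ) = 0 := le_antisymm hT0 T.2
    rw [hT0'] at hcon hbT
    simp only [zero_div] at hcon
    linarith
  set x : ℝ := a * N / T with hx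
  have hx0 : 0 ≤ x := by positivity
  set j : ℕ := ⌊x⌋₊ + 1 with hj
  have hxj : x < (j:ℝ) := by rw [hj]; push_cast; exact Nat.lt_floor_add_one x
  have hjx : (j:ℝ) ≤ x + 1 := by rw [hj]; push_cast; have := Nat.floor_le hx0; linarith
  have hA : a * N < (j:ℝ) * T := by
    rw [hx] at hxj
    calc a * N = (a * N / T) * T := by field_simp
      _ < (j:ℝ) * T := by apply mul_lt_mul_of_pos_right hxj hT
  have hB : (j:ℝ) * T ≤ a * N + T := by
    rw [hx] at hjx
    calc (j:ℝ) * T ≤ (a * N / T + 1) * T := mul_le_mul_of_nonneg_right hjx hT.le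
      _ = a * N + T := by field_simp
  have hC : a * N + T < b * N := by
    have h := mul_lt_mul_of_pos_right hcon hNR
    rw [div_mul_cancel₀ _ hNR.ne'] at h
    nlinarith
  have hjN : j ≤ N := by
    have : (j:ℝ) * T < (N:ℝ) * T := by nlinarith
    have : (j:ℝ) < (N:ℝ) := lt_of_mul_lt_mul_right this T.2
    exact_mod_cast this.le
  obtain ⟨k, hk⟩ := hgrid j hjN
  have hck : (u k : ℝ) = (j:ℝ) * T / N := by rw [hk]; push_cast; ring
  have h1 : u i < u k := by
    rw [← NNReal.coe_lt_coe, hck, lt_div_iff₀ hNR]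
    exact hA
  have h2 : u k < u (i+1) := by
    rw [← NNReal.coe_lt_coe, hck, div_lt_iff₀ hNR]
    nlinarith
  have hk1 : i + 1 ≤ k := by
    by_contra hk1
    push_neg at hk1
    exact absurd (hu (by omega : k ≤ i)) (not_le.mpr h1)
  exact absurd (hu hk1) (not_le.mpr h2)


noncomputable def SS (W : ℝ≥0 → ℝ) (T : ℝ≥0) (δ : ℝ) : ℝ≥0∞ :=
  ⨆ (n : ℕ) (t : ℕ → ℝ≥0) (_ : Monotone t) (_ : t 0 = 0) (_ : t n = T)
      (_ : ∀ i < n, (t (i + 1) : ℝ) - t i < δ),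
      ∑ i ∈ Finset.range n, ENNReal.ofReal (taylorPsi |W (t (i + 1)) - W (t i)|)

lemma qvar_eq (T : ℝ≥0) (ω : Omega) :
    qvar T ω = ⨅ (δ : ℝ) (_ : 0 < δ), SS (fun t => ω t) T δ := rfl

lemma le_SS {W : ℝ≥0 → ℝ} {T : ℝ≥0} {δ : ℝ} {n : ℕ} {t : ℕ → ℝ≥0}
    (h1 : Monotone t) (h2 : t 0 = 0) (h3 : t n = T)
    (h4 : ∀ i < n, (t (i + 1) : ℝ) - t i < δ) :
    psum W t n ≤ SS W T δ :=
  le_iSup_of_le n <| le_iSup_of_le t <| le_iSup_of_le h1 <| le_iSup_of_le h2 <|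
    le_iSup_of_le h3 <| le_iSup_of_le h4 le_rfl

lemma qvar_easy (T : ℝ≥0) (ω : Omega) (g : TimeChange) :
    qvar T (g.act ω) ≤ qvar (g.f T) ω := by
  rw [qvar_eq, qvar_eq]
  refine le_iInf fun δ' => le_iInf fun hδ' => ?_
  have hcomp : IsCompact (Set.Icc (0:ℝ≥0) T) := isCompact_Icc
  have huc : UniformContinuousOn g.f (Set.Icc 0 T) :=
    hcomp.uniformContinuousOn_of_continuous g.continuous.continuousOn
  rw [Metric.uniformContinuousOn_iff] at huc
  obtain ⟨δ, hδ, hδf⟩ := huc δ' hδ'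
  refine iInf_le_of_le δ (iInf_le_of_le hδ ?_)
  refine iSup_le fun n => iSup_le fun t => iSup_le fun hmono => iSup_le fun h0 =>
    iSup_le fun hn => iSup_le fun hmesh => ?_
  have hmesh' : ∀ i < n, ((g.f (t (i+1)) : ℝ)) - g.f (t i) < δ' := by
    intro i hi
    have h1 : t i ∈ Set.Icc (0:ℝ≥0) T := ⟨zero_le, hn ▸ hmono (by omega : i ≤ n)⟩
    have h2 : t (i+1) ∈ Set.Icc (0:ℝ≥0) T := ⟨zero_le, hn ▸ hmono (by omega : i+1 ≤ n)⟩
    have hd : dist (t i) (t (i+1)) < δ := by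
      rw [NNReal.dist_eq, abs_sub_comm, abs_of_nonneg (by
        simp only [sub_nonneg, NNReal.coe_le_coe]; exact hmono (Nat.le_succ i))]
      exact hmesh i hi
    have hlt := hδf _ h1 _ h2 hd
    rw [NNReal.dist_eq, abs_sub_comm] at hlt
    exact lt_of_le_of_lt (le_abs_self _) hlt
  have hmono2 : Monotone (fun i => g.f (t i)) := fun a b hab => g.monotone (hmono hab)
  have hc0 : (fun i => g.f (t i)) 0 = 0 := by simp only [h0, g.map_zero]
  have hcn : (fun i => g.f (t i)) n = g.f T := by simp only [hn]
  have key := le_SS (W := fun s => (ω : Omega) s) (T := g.f T) (δ := δ') (n := n)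
      (t := fun i => g.f (t i)) hmono2 hc0 hcn hmesh'
  refine le_trans (le_of_eq ?_) key
  simp only [psum]
  rfl

lemma qvar_hard (T : ℝ≥0) (ω : Omega) (g : TimeChange) :
    qvar (g.f T) ω ≤ qvar T (g.act ω) := by
  rw [qvar_eq, qvar_eq]
  refine le_iInf fun δ => le_iInf fun hδ => ?_
  obtain ⟨N0, hN0⟩ := exists_nat_gt ((T:ℝ)/δ)
  set N : ℕ := N0 + 1 with hNdef
  have hN : 0 < N := Nat.succ_pos _
  have hNR : (0:ℝ) < (N:ℝ) := by exact_mod_cast hN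
  have hTN : (T:ℝ)/N < δ := by
    rw [div_lt_iff₀ hNR]
    have h1 : (T:ℝ)/δ < (N:ℝ) := by
      push_cast [hNdef]
      linarith
    rw [div_lt_iff₀ hδ] at h1
    linarith
  apply ENNReal.le_of_forall_pos_le_add
  intro ε hε _
  have hε' : (0:ℝ) < (ε:ℝ) := hε
  set η : ℝ := min 1 ((ε:ℝ) / (N+1)) with hηdef
  have hη : 0 < η := lt_min one_pos (by positivity)
  have hηbound : ((N:ℝ)+1) * (η^2/2) ≤ (ε:ℝ) := by
    have h1 : η ≤ 1 := min_le_left _ _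
    have h2 : η ≤ (ε:ℝ)/(N+1) := min_le_right _ _
    have h3 : η^2 ≤ η := by nlinarith
    have h4 : ((N:ℝ)+1) * η ≤ (ε:ℝ) := by
      have h5 := mul_le_mul_of_nonneg_left h2 (le_of_lt (by positivity : (0:ℝ) < (N:ℝ)+1))
      rwa [mul_div_cancel₀ _ (by positivity : ((N:ℝ)+1) ≠ 0)] at h5
    nlinarith
  have hcomp : IsCompact (Set.Icc (0:ℝ≥0) (g.f T)) := isCompact_Icc
  have huc : UniformContinuousOn (fun x => ω x) (Set.Icc 0 (g.f T)) :=
    hcomp.uniformContinuousOn_of_continuous ω.2.continuousOn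
  rw [Metric.uniformContinuousOn_iff] at huc
  obtain ⟨δ', hδ', hδω⟩ := huc η hη
  set W : ℝ≥0 → ℝ := fun x => ω (g.f x) with hW
  have HK : ∀ a b : ℝ≥0, a ≤ b → b ≤ T → (g.f b : ℝ) - g.f a < δ' → |W b - W a| ≤ η := by
    intro a b hab hbT hfab
    have h1 : g.f a ∈ Set.Icc (0:ℝ≥0) (g.f T) := ⟨zero_le, g.monotone (hab.trans hbT)⟩
    have h2 : g.f b ∈ Set.Icc (0:ℝ≥0) (g.f T) := ⟨zero_le, g.monotone hbT⟩
    have hd : dist (g.f a) (g.f b) < δ' := by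
      rw [NNReal.dist_eq, abs_sub_comm, abs_of_nonneg (by
        simp only [sub_nonneg, NNReal.coe_le_coe]; exact g.monotone hab)]
      exact hfab
    have hlt := hδω _ h1 _ h2 hd
    rw [Real.dist_eq, abs_sub_comm] at hlt
    exact hlt.le
  set err : ℝ≥0∞ := ((N+1 : ℕ) : ℝ≥0∞) * ENNReal.ofReal (η^2/2) with herr
  have herrε : err ≤ (ε : ℝ≥0∞) := by
    rw [herr, ← ENNReal.ofReal_natCast, ← ENNReal.ofReal_mul (by positivity)]
    calc ENNReal.ofReal (((N+1:ℕ):ℝ) * (η^2/2)) ≤ ENNReal.ofReal (ε:ℝ) := by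
          apply ENNReal.ofReal_le_ofReal
          push_cast
          push_cast at hηbound
          linarith
      _ = (ε : ℝ≥0∞) := ENNReal.ofReal_coe_nnreal
  have key : SS (fun s => ω s) (g.f T) δ' ≤ SS (fun s => (g.act ω) s) T δ + err := by
    refine iSup_le fun m => iSup_le fun s => iSup_le fun hsmono => iSup_le fun hs0 =>
      iSup_le fun hsm => iSup_le fun hsmesh => ?_
    rcases Nat.eq_zero_or_pos m with hm0 | hmpos
    · subst hm0
      simp
    set L : ℕ → ℝ≥0 := fun i => if i = 0 then 0 else if i < m then sInf {t | s i ≤ g.f t} else T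
      with hL
    have hfL : ∀ i ≤ m, g.f (L i) = s i := by
      intro i hi
      rcases Nat.eq_zero_or_pos i with h0 | hpos
      · subst h0; simp only [hL, if_pos rfl, g.map_zero, hs0]
      · rcases Nat.lt_or_ge i m with hlt | hge
        · simp only [hL, if_neg hpos.ne', if_pos hlt]
          exact (f_sInf g.continuous g.monotone g.map_zero
            (by rw [← hsm]; exact hsmono hlt.le)).1
        · have him : i = m := le_antisymm hi hge
          subst him
          simp only [hL]
          rw [if_neg hpos.ne', if_neg (lt_irrefl _)]
          exact hsm.symm
    have hLmono : Monotone L := by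
      intro i j hij
      rcases Nat.eq_zero_or_pos i with h0 | hpos
      · subst h0; simp only [hL, if_pos rfl]; exact zero_le
      have hj : j ≠ 0 := by omega
      rcases Nat.lt_or_ge j m with hjm | hjm
      · have him : i < m := lt_of_le_of_lt hij hjm
        simp only [hL, if_neg hpos.ne', if_neg hj, if_pos hjm, if_pos him]
        apply csInf_le_csInf (OrderBot.bddBelow _)
        · exact ⟨T, le_trans (hsmono hjm.le) (le_of_eq hsm)⟩
        · intro x hx
          exact le_trans (hsmono hij) hx
      · rcases Nat.lt_or_ge i m with him | him
        · simp only [hL, if_neg hpos.ne', if_neg hj, if_neg (not_lt.mpr hjm), if_pos him]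
          exact (f_sInf g.continuous g.monotone g.map_zero
            (by rw [← hsm]; exact hsmono him.le)).2
        · simp only [hL, if_neg hpos.ne', if_neg hj, if_neg (not_lt.mpr hjm),
            if_neg (not_lt.mpr him)]
          exact le_rfl
    have hL0 : L 0 = 0 := by simp [hL]
    have hLm : L m = T := by simp only [hL, if_neg hmpos.ne', if_neg (lt_irrefl m)]
    have hLmesh : ∀ i < m, (g.f (L (i+1)) : ℝ) - g.f (L i) < δ' := by
      intro i hi
      rw [hfL i (by omega), hfL (i+1) (by omega)]
      exact hsmesh i hi
    have hpsum_eq : psum (fun x => ω x) s m = psum W L m := by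
      apply Finset.sum_congr rfl
      intro i hi
      have hi' := Finset.mem_range.mp hi
      rw [hW]
      simp only [hfL i (by omega), hfL (i+1) (by omega)]
    set cs : ℕ → ℝ≥0 := fun j => (j : ℝ≥0) * T / (N : ℝ≥0) with hcs
    have hcsle : ∀ j < N + 1, cs j ≤ T := by
      intro j hj
      rw [hcs]
      rw [div_le_iff₀ (show (0:ℝ≥0) < (N:ℝ≥0) by exact_mod_cast hN)]
      calc (j:ℝ≥0) * T ≤ (N:ℝ≥0) * T := by
            apply mul_le_mul_left
            exact_mod_cast Nat.le_of_lt_succ hj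
        _ = T * N := mul_comm _ _
    obtain ⟨u, hu, hu0, huB, humesh, hucont, husum⟩ :=
      insert_points W g.f g.monotone T δ' η hη.le HK hδ' (N+1) cs hcsle m L hLmono hL0 hLm hLmesh
    have hreal_mesh := mesh_of_grid hN T hu huB (fun j hj => by
      obtain ⟨k, _, hk⟩ := hucont j (by omega)
      exact ⟨k, hk⟩)
    have hfinal : psum W u (m + (N+1)) ≤ SS (fun s => (g.act ω) s) T δ := by
      apply le_SS hu hu0 huB
      intro i hi
      exact lt_of_le_of_lt (hreal_mesh i hi) hTN
    calc psum (fun x => ω x) s m = psum W L m := hpsum_eq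
      _ ≤ psum W u (m + (N+1)) + ((N+1 : ℕ) : ℝ≥0∞) * ENNReal.ofReal (η^2/2) := husum
      _ ≤ SS (fun s => (g.act ω) s) T δ + err := by
          rw [herr]
          gcongr
  calc (⨅ (δ'' : ℝ) (_ : 0 < δ''), SS (fun t => ω t) (g.f T) δ'')
      ≤ SS (fun t => ω t) (g.f T) δ' := iInf_le_of_le δ' (iInf_le_of_le hδ' le_rfl)
    _ ≤ SS (fun s => (g.act ω) s) T δ + err := key
    _ ≤ SS (fun s => (g.act ω) s) T δ + ε := by gcongr

end QvarAux

/-- `qvar_T(ω∘f) = qvar_{f(T)}(ω)` for every time change `f`. -/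
theorem qvar_timeChange (T : ℝ≥0) (ω : Omega) (g : TimeChange) :
    qvar T (g.act ω) = qvar (g.f T) ω :=
  le_antisymm (QvarAux.qvar_easy T ω g) (QvarAux.qvar_hard T ω g)
end
end

section
/- Let P be a probability measure on (Ω, F) such that the coordinate process X_t(ω) := ω(t) is a martingale with respect to P and the filtration (F_t). Then P(E) ≤ P̄(E) for every event E ∈ F. -/
open MeasureTheory Filter Set
open scoped ENNReal NNReal

noncomputable section

/-- The filtration `(F_t)_{t ∈ [0,∞)}`. -/
def FFfin : Filtration ℝ≥0 instMSOmega where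
  seq := fun t => F t
  mono' := fun _ _ hst => F_mono (ENNReal.coe_le_coe.mpr hst)
  le' := fun _ => F_mono le_top


/-! ### Auxiliary development for Statement 14 -/

section Aux14

/-- The coordinate process. -/
def Xc : ℝ≥0 → Omega → ℝ := fun t ω => ω t

lemma adaptedX : StronglyAdapted FFfin Xc := by
  intro s
  have h1 : MeasurableSpace.comap (fun ω : Omega => ω s) inferInstance ≤ F (s : ℝ≥0∞) :=
    le_iSup₂_of_le s le_rfl le_rfl
  exact (measurable_iff_comap_le.2 h1).stronglyMeasurable

lemma tau_mono (G : SimpleStrategy) {m n : ℕ} (h : m ≤ n) (ω : Omega) :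
    G.τ m ω ≤ G.τ n ω := by
  induction h with
  | refl => exact le_rfl
  | step h ih => exact le_trans ih (G.mono _ ω)

/-- `τ_n ∧ t` as an `ℝ≥0`-valued random time. -/
def sigT (G : SimpleStrategy) (t : ℝ≥0) (n : ℕ) (ω : Omega) : ℝ≥0 :=
  (G.τ n ω ⊓ (t : ℝ≥0∞)).toNNReal

lemma coe_sigT (G : SimpleStrategy) (t : ℝ≥0) (n : ℕ) (ω : Omega) :
    (sigT G t n ω : ℝ≥0∞) = G.τ n ω ⊓ (t : ℝ≥0∞) :=
  ENNReal.coe_toNNReal (lt_of_le_of_lt inf_le_right ENNReal.coe_lt_top).ne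

lemma sigT_le (G : SimpleStrategy) (t : ℝ≥0) (n : ℕ) (ω : Omega) :
    sigT G t n ω ≤ t := by
  rw [← ENNReal.coe_le_coe, coe_sigT]; exact inf_le_right

lemma sigT_mono (G : SimpleStrategy) (t : ℝ≥0) {m n : ℕ} (h : m ≤ n) (ω : Omega) :
    sigT G t m ω ≤ sigT G t n ω := by
  rw [← ENNReal.coe_le_coe, coe_sigT, coe_sigT]
  exact inf_le_inf_right _ (tau_mono G h ω)

lemma sigT_eq_of_le {G : SimpleStrategy} {t : ℝ≥0} {n : ℕ} {ω : Omega}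
    (h : (t : ℝ≥0∞) ≤ G.τ n ω) : sigT G t n ω = t := by
  have : (sigT G t n ω : ℝ≥0∞) = (t : ℝ≥0∞) := by rw [coe_sigT]; exact inf_eq_right.2 h
  exact_mod_cast this

lemma tau_eq_coe_sigT {G : SimpleStrategy} {t : ℝ≥0} {n : ℕ} {ω : Omega}
    (h : G.τ n ω < (t : ℝ≥0∞)) : G.τ n ω = (sigT G t n ω : ℝ≥0∞) := by
  rw [coe_sigT]; exact (inf_eq_left.2 h.le).symm

lemma isStoppingTime_sigT (G : SimpleStrategy) (t : ℝ≥0) (n : ℕ) :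
    IsStoppingTime FFfin (fun x => ((sigT G t n x : ℝ≥0) : WithTop ℝ≥0)) := by
  intro s
  simp only [WithTop.coe_le_coe]
  by_cases hst : t ≤ s
  · have : {ω | sigT G t n ω ≤ s} = Set.univ :=
      Set.eq_univ_of_forall fun ω => le_trans (sigT_le G t n ω) hst
    rw [this]; exact MeasurableSet.univ
  · have : {ω | sigT G t n ω ≤ s} = {ω | G.τ n ω ≤ (s : ℝ≥0∞)} := by
      ext ω
      simp only [Set.mem_setOf_eq]
      rw [← ENNReal.coe_le_coe, coe_sigT]
      constructor
      · intro h
        rcases inf_le_iff.1 h with h' | h'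
        · exact h'
        · exact absurd (ENNReal.coe_le_coe.1 h') hst
      · intro h; exact le_trans inf_le_left h
    rw [this]
    have h := G.isStopping n (s : ℝ≥0∞)
    simp only [WithTop.coe_le_coe] at h
    exact h

/-- Dyadic upper approximation in `ℝ≥0`. -/
def dyd (m : ℕ) (x : ℝ≥0) : ℝ≥0 := (⌈x * 2 ^ m⌉₊ : ℝ≥0) / 2 ^ m

lemma two_pow_pos (m : ℕ) : (0 : ℝ≥0) < 2 ^ m := pow_pos (by norm_num) m

lemma le_dyd (m : ℕ) (x : ℝ≥0) : x ≤ dyd m x := by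
  rw [dyd, le_div_iff₀ (two_pow_pos m)]
  exact Nat.le_ceil _

lemma dyd_le_add (m : ℕ) (x : ℝ≥0) : dyd m x ≤ x + (2 ^ m)⁻¹ := by
  rw [dyd, div_le_iff₀ (two_pow_pos m), add_mul, inv_mul_cancel₀ (two_pow_pos m).ne']
  exact le_of_lt (Nat.ceil_lt_add_one zero_le)

lemma dyd_mono (m : ℕ) {x y : ℝ≥0} (h : x ≤ y) : dyd m x ≤ dyd m y := by
  rw [dyd, dyd]
  gcongr


lemma tendsto_dyd (x : ℝ≥0) : Tendsto (fun m => dyd m x) atTop (nhds x) := by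
  rw [← NNReal.tendsto_coe]
  have h1 : Tendsto (fun m : ℕ => (x : ℝ) + ((2 : ℝ) ^ m)⁻¹) atTop (nhds ((x : ℝ) + 0)) :=
    tendsto_const_nhds.add
      (tendsto_inv_atTop_zero.comp (tendsto_pow_atTop_atTop_of_one_lt (by norm_num)))
  rw [add_zero] at h1
  refine tendsto_of_tendsto_of_tendsto_of_le_of_le tendsto_const_nhds h1
    (fun m => ?_) (fun m => ?_)
  · exact_mod_cast le_dyd m x
  · have h2 : ((dyd m x : ℝ≥0) : ℝ) ≤ ((x + ((2 : ℝ≥0) ^ m)⁻¹ : ℝ≥0) : ℝ) :=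
      NNReal.coe_le_coe.2 (dyd_le_add m x)
    simpa [NNReal.coe_add, NNReal.coe_inv, NNReal.coe_pow] using h2

lemma dyd_le_iff (m : ℕ) (x s : ℝ≥0) :
    dyd m x ≤ s ↔ x ≤ (⌊s * 2 ^ m⌋₊ : ℝ≥0) / 2 ^ m := by
  rw [dyd, div_le_iff₀ (two_pow_pos m), le_div_iff₀ (two_pow_pos m)]
  constructor
  · intro h
    calc x * 2 ^ m ≤ (⌈x * 2 ^ m⌉₊ : ℝ≥0) := Nat.le_ceil _
      _ ≤ (⌊s * 2 ^ m⌋₊ : ℝ≥0) := by exact_mod_cast Nat.le_floor h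
  · intro h
    have h2 : ⌈x * 2 ^ m⌉₊ ≤ ⌊s * 2 ^ m⌋₊ := Nat.ceil_le.2 h
    calc (⌈x * 2 ^ m⌉₊ : ℝ≥0) ≤ (⌊s * 2 ^ m⌋₊ : ℝ≥0) := by exact_mod_cast h2
      _ ≤ s * 2 ^ m := Nat.floor_le zero_le

lemma floor_div_le (m : ℕ) (s : ℝ≥0) : (⌊s * 2 ^ m⌋₊ : ℝ≥0) / 2 ^ m ≤ s := by
  rw [div_le_iff₀ (two_pow_pos m)]
  exact Nat.floor_le zero_le

lemma isStoppingTime_dyd {σ : Omega → ℝ≥0}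
    (hσ : IsStoppingTime FFfin (fun ω => ((σ ω : ℝ≥0) : WithTop ℝ≥0))) (m : ℕ) :
    IsStoppingTime FFfin (fun ω => ((dyd m (σ ω) : ℝ≥0) : WithTop ℝ≥0)) := by
  intro s
  simp only [WithTop.coe_le_coe]
  have hset : {ω | dyd m (σ ω) ≤ s} = {ω | σ ω ≤ (⌊s * 2 ^ m⌋₊ : ℝ≥0) / 2 ^ m} := by
    ext ω; exact dyd_le_iff m (σ ω) s
  rw [hset]
  exact FFfin.mono (floor_div_le m s) _
    (by simpa only [WithTop.coe_le_coe] using hσ ((⌊s * 2 ^ m⌋₊ : ℝ≥0) / 2 ^ m))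

lemma dyd_mem_finset {t : ℝ≥0} {x : ℝ≥0} (hx : x ≤ t) (m : ℕ) :
    dyd m x ∈ (Finset.range (⌈t * 2 ^ m⌉₊ + 1)).image
      (fun k : ℕ => (k : ℝ≥0) / 2 ^ m) := by
  refine Finset.mem_image.2 ⟨⌈x * 2 ^ m⌉₊, Finset.mem_range.2 ?_, rfl⟩
  exact Nat.lt_succ_of_le (Nat.ceil_le_ceil (mul_le_mul_left hx _))


instance : Inhabited Omega := ⟨⟨fun _ => 0, continuous_const⟩⟩

lemma progX : IsStronglyProgressive FFfin Xc :=
  adaptedX.isStronglyProgressive_of_continuous fun ω => ω.2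

lemma measurable_sv {σ : Omega → WithTop ℝ≥0} (hσ : IsStoppingTime FFfin σ) {b : ℝ≥0}
    (hb : ∀ ω, σ ω ≤ (b : WithTop ℝ≥0)) : Measurable (stoppedValue Xc σ) :=
  (measurable_stoppedValue progX hσ).mono (hσ.measurableSpace_le_of_le hb) le_rfl

lemma measurable_bet (G : SimpleStrategy) (n : ℕ) : Measurable (G.bet n) :=
  (G.bet_measurable n).mono
    ((G.isStopping n).measurableSpace_le_of_le (n := ⊤) fun _ => WithTop.coe_le_coe.2 le_top) le_rfl

/-- Dyadic approximation of `sigT`. -/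
def sigD (G : SimpleStrategy) (t : ℝ≥0) (m n : ℕ) (ω : Omega) : ℝ≥0 :=
  dyd m (sigT G t n ω)

lemma isStoppingTime_sigD (G : SimpleStrategy) (t : ℝ≥0) (m n : ℕ) :
    IsStoppingTime FFfin (fun x => ((sigD G t m n x : ℝ≥0) : WithTop ℝ≥0)) :=
  isStoppingTime_dyd (isStoppingTime_sigT G t n) m

lemma sigD_le_bound (G : SimpleStrategy) (t : ℝ≥0) (m n : ℕ) (ω : Omega) :
    sigD G t m n ω ≤ t + 1 := by
  refine (dyd_le_add m _).trans (add_le_add (sigT_le G t n ω) ?_)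
  rw [inv_le_one₀ (two_pow_pos m)]
  exact one_le_pow₀ (by norm_num)

lemma sigT_le_sigD (G : SimpleStrategy) (t : ℝ≥0) (m n : ℕ) (ω : Omega) :
    sigT G t n ω ≤ sigD G t m n ω := le_dyd m _

lemma sigD_mono (G : SimpleStrategy) (t : ℝ≥0) (m : ℕ) {n n' : ℕ} (h : n ≤ n') (ω : Omega) :
    sigD G t m n ω ≤ sigD G t m n' ω := dyd_mono m (sigT_mono G t h ω)

lemma countable_range_sigD (G : SimpleStrategy) (t : ℝ≥0) (m n : ℕ) :
    (Set.range (fun x => ((sigD G t m n x : ℝ≥0) : WithTop ℝ≥0))).Countable := by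
  have h : (Set.range (sigD G t m n)).Countable := by
    refine Set.Countable.mono ?_
      ((Finset.range (⌈t * 2 ^ m⌉₊ + 1)).image fun k : ℕ => (k : ℝ≥0) / 2 ^ m).countable_toSet
    rintro x ⟨ω, rfl⟩
    exact Finset.mem_coe.2 (dyd_mem_finset (sigT_le G t n ω) m)
  exact (h.image (fun x : ℝ≥0 => (x : WithTop ℝ≥0))).mono
    (by rintro _ ⟨ω, rfl⟩; exact ⟨_, ⟨ω, rfl⟩, rfl⟩)

lemma tendsto_sigD (G : SimpleStrategy) (t : ℝ≥0) (n : ℕ) (ω : Omega) :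
    Tendsto (fun m => sigD G t m n ω) atTop (nhds (sigT G t n ω)) := tendsto_dyd _

lemma tendsto_sv_sigD (G : SimpleStrategy) (t : ℝ≥0) (n : ℕ) (ω : Omega) :
    Tendsto (fun m => stoppedValue Xc (fun x => ((sigD G t m n x : ℝ≥0) : WithTop ℝ≥0)) ω) atTop
      (nhds (stoppedValue Xc (fun x => ((sigT G t n x : ℝ≥0) : WithTop ℝ≥0)) ω)) :=
  (ω.2.tendsto _).comp (tendsto_sigD G t n ω)

lemma incr_integral_zero (P : Measure Omega) [IsProbabilityMeasure P]
    (hmart : Martingale Xc FFfin P) (G : SimpleStrategy) (t : ℝ≥0) (n : ℕ) :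
    Integrable (fun ω => G.bet n ω *
      (stoppedValue Xc (fun x => ((sigT G t (n + 1) x : ℝ≥0) : WithTop ℝ≥0)) ω - stoppedValue Xc (fun x => ((sigT G t n x : ℝ≥0) : WithTop ℝ≥0)) ω)) P ∧
    ∫ ω, G.bet n ω *
      (stoppedValue Xc (fun x => ((sigT G t (n + 1) x : ℝ≥0) : WithTop ℝ≥0)) ω - stoppedValue Xc (fun x => ((sigT G t n x : ℝ≥0) : WithTop ℝ≥0)) ω) ∂P = 0 := by
  obtain ⟨C, hC⟩ := G.bet_bounded n
  have hC0 : 0 ≤ C := le_trans (abs_nonneg _) (hC default)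
  set A : Set Omega := {ω | G.τ n ω < (t : ℝ≥0∞)} with hA
  set bet' : Omega → ℝ := A.indicator (G.bet n) with hbet'
  have hAt : MeasurableSet[F (t : ℝ≥0∞)] A := by
    have h := (G.isStopping n).measurableSet_lt (t : ℝ≥0∞)
    simp only [WithTop.coe_lt_coe] at h
    exact h
  have hAmeas : MeasurableSet A := FF.le (t : ℝ≥0∞) _ hAt
  have hbet'_meas : Measurable bet' := (measurable_bet G n).indicator hAmeas
  have hbet'_bdd : ∀ ω, ‖bet' ω‖ ≤ C := by
    intro ω
    by_cases h : ω ∈ A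
    · rw [hbet', Set.indicator_of_mem h, Real.norm_eq_abs]; exact hC ω
    · rw [hbet', Set.indicator_of_notMem h, norm_zero]; exact hC0
  -- the stopping times
  have hstD : ∀ m k, IsStoppingTime FFfin (fun x => ((sigD G t m k x : ℝ≥0) : WithTop ℝ≥0)) :=
    isStoppingTime_sigD G t
  have hstD' : ∀ m k (s : ℝ≥0), MeasurableSet[FFfin s] {ω | sigD G t m k ω ≤ s} :=
    fun m k s => by simpa only [WithTop.coe_le_coe] using hstD m k s
  have hbdD : ∀ m k ω, ((sigD G t m k ω : ℝ≥0) : WithTop ℝ≥0) ≤ ((t + 1 : ℝ≥0) : WithTop ℝ≥0) :=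
    fun m k ω => WithTop.coe_le_coe.2 (sigD_le_bound G t m k ω)
  -- A intersected with level sets of sigD is measurable
  have hAstop : ∀ m (s : ℝ≥0),
      MeasurableSet[FFfin s] (A ∩ {ω | sigD G t m n ω ≤ s}) := by
    intro m s
    by_cases hs : t ≤ s
    · have h1 : F (t : ℝ≥0∞) ≤ F (s : ℝ≥0∞) := F_mono (ENNReal.coe_le_coe.2 hs)
      exact (h1 _ hAt).inter (hstD' m n s)
    · have heq : A ∩ {ω | sigD G t m n ω ≤ s} = {ω | sigD G t m n ω ≤ s} := by
        refine Set.inter_eq_right.2 fun ω hω => ?_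
        by_contra hc
        have h1 : sigT G t n ω = t := sigT_eq_of_le (not_lt.1 hc)
        have h2 : t ≤ sigD G t m n ω := by
          calc t = sigT G t n ω := h1.symm
            _ ≤ sigD G t m n ω := sigT_le_sigD G t m n ω
        exact hs (h2.trans hω)
      rw [heq]; exact hstD' m n s
  have hkeyset : ∀ m (B : Set ℝ), MeasurableSet B → ∀ s : ℝ≥0,
      MeasurableSet[FFfin s] ((G.bet n ⁻¹' B ∩ A) ∩ {ω | sigD G t m n ω ≤ s}) := by
    intro m B hB s
    have heq : (G.bet n ⁻¹' B ∩ A) ∩ {ω | sigD G t m n ω ≤ s} =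
        (G.bet n ⁻¹' B ∩ {ω | G.τ n ω ≤ ((s : ℝ≥0) : ℝ≥0∞)}) ∩
          (A ∩ {ω | sigD G t m n ω ≤ s}) := by
      ext ω
      constructor
      · rintro ⟨⟨hb, ha⟩, hd⟩
        refine ⟨⟨hb, ?_⟩, ha, hd⟩
        show G.τ n ω ≤ ((s : ℝ≥0) : ℝ≥0∞)
        rw [tau_eq_coe_sigT ha]
        exact ENNReal.coe_le_coe.2 ((sigT_le_sigD G t m n ω).trans hd)
      · rintro ⟨⟨hb, _⟩, ha, hd⟩
        exact ⟨⟨hb, ha⟩, hd⟩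
    rw [heq]
    refine MeasurableSet.inter ?_ (hAstop m s)
    have h := (((G.isStopping n).measurableSet _).1 ((G.bet_measurable n) hB)).2 ((s : ℝ≥0) : ℝ≥0∞)
    simp only [WithTop.coe_le_coe] at h
    exact h
  have hbet'_sm : ∀ m, StronglyMeasurable[(hstD m n).measurableSpace] bet' := by
    intro m
    refine Measurable.stronglyMeasurable fun B hB => ?_
    rw [(hstD m n).measurableSet]
    suffices h : ∀ s : ℝ≥0, MeasurableSet[FFfin s] (bet' ⁻¹' B ∩ {ω | sigD G t m n ω ≤ s}) by
      refine ⟨?_, fun s => by simpa only [WithTop.coe_le_coe] using h s⟩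
      have h1 := h (t + 1)
      have h2 : bet' ⁻¹' B ∩ {ω | sigD G t m n ω ≤ t + 1} = bet' ⁻¹' B :=
        Set.inter_eq_left.2 fun ω _ => sigD_le_bound G t m n ω
      rw [h2] at h1
      exact le_iSup (fun i => (FFfin i : MeasurableSpace Omega)) (t + 1) _ h1
    intro s
    by_cases h0 : (0 : ℝ) ∈ B
    · have hsplit : bet' ⁻¹' B = (G.bet n ⁻¹' B ∩ A) ∪ Aᶜ := by
        ext ω
        by_cases h : ω ∈ A <;>
          simp [hbet', Set.indicator_of_mem, Set.indicator_of_notMem, h, h0]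
      rw [hsplit, Set.union_inter_distrib_right]
      refine (hkeyset m B hB s).union ?_
      have : Aᶜ ∩ {ω | sigD G t m n ω ≤ s} =
          {ω | sigD G t m n ω ≤ s} \ (A ∩ {ω | sigD G t m n ω ≤ s}) := by
        ext ω; simp only [Set.mem_inter_iff, Set.mem_compl_iff, Set.mem_diff]; tauto
      rw [this]
      exact (hstD' m n s).diff (hAstop m s)
    · have hsplit : bet' ⁻¹' B = G.bet n ⁻¹' B ∩ A := by
        ext ω
        by_cases h : ω ∈ A <;>
          simp [hbet', Set.indicator_of_mem, Set.indicator_of_notMem, h, h0]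
      rw [hsplit]
      exact hkeyset m B hB s
  -- optional sampling
  have hosconst : ∀ m k, stoppedValue Xc (fun x => ((sigD G t m k x : ℝ≥0) : WithTop ℝ≥0)) =ᵐ[P]
      P[Xc (t + 1)|(hstD m k).measurableSpace] := fun m k =>
    hmart.stoppedValue_ae_eq_condExp_of_le_const_of_countable_range (hstD m k)
      (hbdD m k) (countable_range_sigD G t m k)
  have hosm : ∀ m, stoppedValue Xc (fun x => ((sigD G t m n x : ℝ≥0) : WithTop ℝ≥0)) =ᵐ[P]
      P[stoppedValue Xc (fun x => ((sigD G t m (n + 1) x : ℝ≥0) : WithTop ℝ≥0))|(hstD m n).measurableSpace] := fun m =>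
    hmart.stoppedValue_ae_eq_condExp_of_le_of_countable_range (hstD m (n + 1)) (hstD m n)
      (fun ω => WithTop.coe_le_coe.2 (sigD_mono G t m (Nat.le_succ n) ω)) (hbdD m (n + 1))
      (countable_range_sigD G t m (n + 1)) (countable_range_sigD G t m n)
  have hintD : ∀ m k, Integrable (stoppedValue Xc (fun x => ((sigD G t m k x : ℝ≥0) : WithTop ℝ≥0))) P := fun m k =>
    integrable_condExp.congr (hosconst m k).symm
  have msvD : ∀ m k, Measurable (stoppedValue Xc (fun x => ((sigD G t m k x : ℝ≥0) : WithTop ℝ≥0))) := fun m k =>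
    measurable_sv (hstD m k) (hbdD m k)
  have msvT : ∀ k, Measurable (stoppedValue Xc (fun x => ((sigT G t k x : ℝ≥0) : WithTop ℝ≥0))) := fun k =>
    measurable_sv (isStoppingTime_sigT G t k) (fun ω => WithTop.coe_le_coe.2 (sigT_le G t k ω))
  -- uniform integrability & memℒp of the limit
  have hui : ∀ k, UnifIntegrable (fun m => stoppedValue Xc (fun x => ((sigD G t m k x : ℝ≥0) : WithTop ℝ≥0))) 1 P := by
    intro k
    have h1 := ((hmart.integrable (t + 1)).uniformIntegrable_condExp
      (fun m : ℕ => (hstD m k).measurableSpace_le_of_le (hbdD m k))).2.1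
    exact h1.ae_eq fun m => (hosconst m k).symm
  have hCbound : ∀ k, ∃ C' : ℝ≥0, ∀ m,
      eLpNorm (stoppedValue Xc (fun x => ((sigD G t m k x : ℝ≥0) : WithTop ℝ≥0))) 1 P ≤ C' := by
    intro k
    obtain ⟨C', hC'⟩ := ((hmart.integrable (t + 1)).uniformIntegrable_condExp
      (fun m : ℕ => (hstD m k).measurableSpace_le_of_le (hbdD m k))).2.2
    exact ⟨C', fun m => le_trans (le_of_eq (eLpNorm_congr_ae (hosconst m k))) (hC' m)⟩
  have hmem : ∀ k, MemLp (stoppedValue Xc (fun x => ((sigT G t k x : ℝ≥0) : WithTop ℝ≥0))) 1 P := by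
    intro k
    obtain ⟨C', hC'⟩ := hCbound k
    refine ⟨(msvT k).aestronglyMeasurable, ?_⟩
    rw [eLpNorm_one_eq_lintegral_enorm]
    have hpt : ∀ ω, Tendsto (fun m => (‖stoppedValue Xc (fun x => ((sigD G t m k x : ℝ≥0) : WithTop ℝ≥0)) ω‖₊ : ℝ≥0∞))
        atTop (nhds (‖stoppedValue Xc (fun x => ((sigT G t k x : ℝ≥0) : WithTop ℝ≥0)) ω‖₊ : ℝ≥0∞)) := fun ω =>
      (ENNReal.continuous_coe.tendsto _).comp (tendsto_sv_sigD G t k ω).nnnorm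
    have heqpt : ∀ ω, (‖stoppedValue Xc (fun x => ((sigT G t k x : ℝ≥0) : WithTop ℝ≥0)) ω‖₊ : ℝ≥0∞) =
        liminf (fun m => (‖stoppedValue Xc (fun x => ((sigD G t m k x : ℝ≥0) : WithTop ℝ≥0)) ω‖₊ : ℝ≥0∞)) atTop := fun ω =>
      ((hpt ω).liminf_eq).symm
    calc ∫⁻ ω, (‖stoppedValue Xc (fun x => ((sigT G t k x : ℝ≥0) : WithTop ℝ≥0)) ω‖₊ : ℝ≥0∞) ∂P
        = ∫⁻ ω, liminf (fun m => (‖stoppedValue Xc (fun x => ((sigD G t m k x : ℝ≥0) : WithTop ℝ≥0)) ω‖₊ : ℝ≥0∞)) atTop ∂P := by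
          exact lintegral_congr fun ω => heqpt ω
      _ ≤ liminf (fun m => ∫⁻ ω, (‖stoppedValue Xc (fun x => ((sigD G t m k x : ℝ≥0) : WithTop ℝ≥0)) ω‖₊ : ℝ≥0∞) ∂P) atTop :=
          lintegral_liminf_le fun m => (msvD m k).nnnorm.coe_nnreal_ennreal
      _ ≤ (C' : ℝ≥0∞) := by
          refine Filter.liminf_le_of_frequently_le (Filter.Frequently.of_forall fun m => ?_) ?_
          · exact eLpNorm_one_eq_lintegral_enorm.symm.trans_le (hC' m)
          · isBoundedDefault
      _ < ⊤ := ENNReal.coe_lt_top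
  have hintT : ∀ k, Integrable (stoppedValue Xc (fun x => ((sigT G t k x : ℝ≥0) : WithTop ℝ≥0))) P := fun k =>
    memLp_one_iff_integrable.1 (hmem k)
  -- L¹ convergence
  have hL1 : ∀ k, Tendsto (fun m =>
      eLpNorm (stoppedValue Xc (fun x => ((sigD G t m k x : ℝ≥0) : WithTop ℝ≥0)) - stoppedValue Xc (fun x => ((sigT G t k x : ℝ≥0) : WithTop ℝ≥0))) 1 P)
      atTop (nhds 0) := fun k =>
    tendsto_Lp_finite_of_tendsto_ae le_rfl ENNReal.one_ne_top
      (fun m => (msvD m k).aestronglyMeasurable) (hmem k) (hui k)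
      (Filter.Eventually.of_forall fun ω => tendsto_sv_sigD G t k ω)
  -- per-level integral identity
  have hprod_int : ∀ m k, Integrable (fun ω => bet' ω * stoppedValue Xc (fun x => ((sigD G t m k x : ℝ≥0) : WithTop ℝ≥0)) ω) P :=
    fun m k => (hintD m k).bdd_mul hbet'_meas.aestronglyMeasurable
      (Filter.Eventually.of_forall hbet'_bdd)
  have hintegral_eq : ∀ m, ∫ ω, bet' ω * stoppedValue Xc (fun x => ((sigD G t m (n + 1) x : ℝ≥0) : WithTop ℝ≥0)) ω ∂P =
      ∫ ω, bet' ω * stoppedValue Xc (fun x => ((sigD G t m n x : ℝ≥0) : WithTop ℝ≥0)) ω ∂P := by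
    intro m
    have hle : (hstD m n).measurableSpace ≤ instMSOmega :=
      (hstD m n).measurableSpace_le_of_le (hbdD m n)
    have h1 := condExp_mul_of_stronglyMeasurable_left (μ := P) (hbet'_sm m)
      (hprod_int m (n + 1)) (hintD m (n + 1))
    have h2 : bet' * P[stoppedValue Xc (fun x => ((sigD G t m (n + 1) x : ℝ≥0) : WithTop ℝ≥0))|(hstD m n).measurableSpace] =ᵐ[P]
        fun ω => bet' ω * stoppedValue Xc (fun x => ((sigD G t m n x : ℝ≥0) : WithTop ℝ≥0)) ω := by
      filter_upwards [hosm m] with ω hω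
      show bet' ω * _ = bet' ω * _
      rw [← hω]
    have h0 : (fun ω => bet' ω * stoppedValue Xc (fun x => ((sigD G t m (n + 1) x : ℝ≥0) : WithTop ℝ≥0)) ω) =
        bet' * stoppedValue Xc (fun x => ((sigD G t m (n + 1) x : ℝ≥0) : WithTop ℝ≥0)) := rfl
    calc ∫ ω, bet' ω * stoppedValue Xc (fun x => ((sigD G t m (n + 1) x : ℝ≥0) : WithTop ℝ≥0)) ω ∂P
        = ∫ ω, (P[bet' * stoppedValue Xc (fun x => ((sigD G t m (n + 1) x : ℝ≥0) : WithTop ℝ≥0))|(hstD m n).measurableSpace]) ω ∂P := by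
          rw [h0, integral_condExp hle]
      _ = ∫ ω, bet' ω * stoppedValue Xc (fun x => ((sigD G t m n x : ℝ≥0) : WithTop ℝ≥0)) ω ∂P :=
          integral_congr_ae (h1.trans h2)
  -- pass to the limit
  set FmF : ℕ → Omega → ℝ := fun m ω => bet' ω *
    (stoppedValue Xc (fun x => ((sigD G t m (n + 1) x : ℝ≥0) : WithTop ℝ≥0)) ω - stoppedValue Xc (fun x => ((sigD G t m n x : ℝ≥0) : WithTop ℝ≥0)) ω) with hFmF
  set Flim : Omega → ℝ := fun ω => bet' ω *
    (stoppedValue Xc (fun x => ((sigT G t (n + 1) x : ℝ≥0) : WithTop ℝ≥0)) ω - stoppedValue Xc (fun x => ((sigT G t n x : ℝ≥0) : WithTop ℝ≥0)) ω) with hFlim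
  have hFm_int : ∀ m, Integrable (FmF m) P := fun m =>
    ((hintD m (n + 1)).sub (hintD m n)).bdd_mul hbet'_meas.aestronglyMeasurable
      (Filter.Eventually.of_forall hbet'_bdd)
  have hF_int : Integrable Flim P :=
    ((hintT (n + 1)).sub (hintT n)).bdd_mul hbet'_meas.aestronglyMeasurable
      (Filter.Eventually.of_forall hbet'_bdd)
  have hFm_zero : ∀ m, ∫ ω, FmF m ω ∂P = 0 := by
    intro m
    have : ∀ ω, FmF m ω = bet' ω * stoppedValue Xc (fun x => ((sigD G t m (n + 1) x : ℝ≥0) : WithTop ℝ≥0)) ω -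
        bet' ω * stoppedValue Xc (fun x => ((sigD G t m n x : ℝ≥0) : WithTop ℝ≥0)) ω := fun ω => mul_sub _ _ _
    rw [integral_congr_ae (Filter.Eventually.of_forall this),
      integral_sub (hprod_int m (n + 1)) (hprod_int m n), hintegral_eq m, sub_self]
  -- L¹ convergence of FmF to Flim
  have hlint : Tendsto (fun m => ∫⁻ ω, (‖FmF m ω - Flim ω‖₊ : ℝ≥0∞) ∂P) atTop (nhds 0) := by
    set e1 : ℕ → ℝ≥0∞ := fun m =>
      ∫⁻ ω, (‖stoppedValue Xc (fun x => ((sigD G t m (n + 1) x : ℝ≥0) : WithTop ℝ≥0)) ω - stoppedValue Xc (fun x => ((sigT G t (n + 1) x : ℝ≥0) : WithTop ℝ≥0)) ω‖₊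
        : ℝ≥0∞) ∂P with he1
    set e2 : ℕ → ℝ≥0∞ := fun m =>
      ∫⁻ ω, (‖stoppedValue Xc (fun x => ((sigD G t m n x : ℝ≥0) : WithTop ℝ≥0)) ω - stoppedValue Xc (fun x => ((sigT G t n x : ℝ≥0) : WithTop ℝ≥0)) ω‖₊
        : ℝ≥0∞) ∂P with he2
    have hpt : ∀ m ω, (‖FmF m ω - Flim ω‖₊ : ℝ≥0∞) ≤ ENNReal.ofReal C *
        ((‖stoppedValue Xc (fun x => ((sigD G t m (n + 1) x : ℝ≥0) : WithTop ℝ≥0)) ω - stoppedValue Xc (fun x => ((sigT G t (n + 1) x : ℝ≥0) : WithTop ℝ≥0)) ω‖₊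
          : ℝ≥0∞) +
         (‖stoppedValue Xc (fun x => ((sigD G t m n x : ℝ≥0) : WithTop ℝ≥0)) ω - stoppedValue Xc (fun x => ((sigT G t n x : ℝ≥0) : WithTop ℝ≥0)) ω‖₊ : ℝ≥0∞)) := by
      intro m ω
      simp only [← enorm_eq_nnnorm]
      rw [← ofReal_norm, ← ofReal_norm,
        ← ofReal_norm, ← ENNReal.ofReal_add (norm_nonneg _) (norm_nonneg _),
        ← ENNReal.ofReal_mul hC0]
      refine ENNReal.ofReal_le_ofReal ?_
      have heq : FmF m ω - Flim ω = bet' ω *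
          ((stoppedValue Xc (fun x => ((sigD G t m (n + 1) x : ℝ≥0) : WithTop ℝ≥0)) ω - stoppedValue Xc (fun x => ((sigT G t (n + 1) x : ℝ≥0) : WithTop ℝ≥0)) ω) -
           (stoppedValue Xc (fun x => ((sigD G t m n x : ℝ≥0) : WithTop ℝ≥0)) ω - stoppedValue Xc (fun x => ((sigT G t n x : ℝ≥0) : WithTop ℝ≥0)) ω)) := by
        rw [hFmF, hFlim]; ring
      rw [heq, norm_mul]
      refine mul_le_mul (hbet'_bdd ω) ?_ (norm_nonneg _) hC0
      exact (norm_sub_le _ _)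
    have hle : ∀ m, ∫⁻ ω, (‖FmF m ω - Flim ω‖₊ : ℝ≥0∞) ∂P ≤
        ENNReal.ofReal C * (e1 m + e2 m) := by
      intro m
      calc ∫⁻ ω, (‖FmF m ω - Flim ω‖₊ : ℝ≥0∞) ∂P
          ≤ ∫⁻ ω, ENNReal.ofReal C *
            ((‖stoppedValue Xc (fun x => ((sigD G t m (n + 1) x : ℝ≥0) : WithTop ℝ≥0)) ω -
                stoppedValue Xc (fun x => ((sigT G t (n + 1) x : ℝ≥0) : WithTop ℝ≥0)) ω‖₊ : ℝ≥0∞) +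
             (‖stoppedValue Xc (fun x => ((sigD G t m n x : ℝ≥0) : WithTop ℝ≥0)) ω - stoppedValue Xc (fun x => ((sigT G t n x : ℝ≥0) : WithTop ℝ≥0)) ω‖₊
                : ℝ≥0∞)) ∂P := lintegral_mono (hpt m)
        _ = ENNReal.ofReal C * (e1 m + e2 m) := by
            rw [lintegral_const_mul _ ?_, lintegral_add_left ?_]
            · exact ((msvD m (n + 1)).sub (msvT (n + 1))).nnnorm.coe_nnreal_ennreal
            · exact (((msvD m (n + 1)).sub (msvT (n + 1))).nnnorm.coe_nnreal_ennreal).add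
                ((msvD m n).sub (msvT n)).nnnorm.coe_nnreal_ennreal
    have he1t : Tendsto e1 atTop (nhds 0) := by
      have := hL1 (n + 1)
      simp only [eLpNorm_one_eq_lintegral_enorm] at this
      exact this
    have he2t : Tendsto e2 atTop (nhds 0) := by
      have := hL1 n
      simp only [eLpNorm_one_eq_lintegral_enorm] at this
      exact this
    have hrhs : Tendsto (fun m => ENNReal.ofReal C * (e1 m + e2 m)) atTop (nhds 0) := by
      have h1 : Tendsto (fun m => e1 m + e2 m) atTop (nhds 0) := by
        have := he1t.add he2t
        rwa [add_zero] at this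
      have h2 := ENNReal.Tendsto.const_mul (a := ENNReal.ofReal C) h1
        (Or.inr ENNReal.ofReal_ne_top)
      rwa [mul_zero] at h2
    exact tendsto_of_tendsto_of_tendsto_of_le_of_le tendsto_const_nhds hrhs
      (fun m => zero_le) hle
  have htend : Tendsto (fun m => ∫ ω, FmF m ω ∂P) atTop (nhds (∫ ω, Flim ω ∂P)) :=
    tendsto_integral_of_L1 Flim hF_int.aestronglyMeasurable (Filter.Eventually.of_forall hFm_int) hlint
  have hFzero : ∫ ω, Flim ω ∂P = 0 :=
    tendsto_nhds_unique htend ((tendsto_congr fun m => (hFm_zero m)).2 tendsto_const_nhds)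
  -- identify Flim with the target integrand
  have hptF : ∀ ω, G.bet n ω *
      (stoppedValue Xc (fun x => ((sigT G t (n + 1) x : ℝ≥0) : WithTop ℝ≥0)) ω - stoppedValue Xc (fun x => ((sigT G t n x : ℝ≥0) : WithTop ℝ≥0)) ω) = Flim ω := by
    intro ω
    by_cases h : ω ∈ A
    · rw [hFlim]; simp only [hbet', Set.indicator_of_mem h]
    · have h1 : sigT G t n ω = t := sigT_eq_of_le (not_lt.1 h)
      have h2 : sigT G t (n + 1) ω = t := by
        refine sigT_eq_of_le (le_trans (not_lt.1 h) (tau_mono G (Nat.le_succ n) ω))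
      rw [hFlim]
      show G.bet n ω * (Xc (sigT G t (n+1) ω) ω - Xc (sigT G t n ω) ω) =
        bet' ω * (Xc (sigT G t (n+1) ω) ω - Xc (sigT G t n ω) ω)
      rw [h1, h2, sub_self, mul_zero, mul_zero]
  constructor
  · exact hF_int.congr (Filter.Eventually.of_forall fun ω => (hptF ω).symm)
  · rw [integral_congr_ae (Filter.Eventually.of_forall hptF)]
    exact hFzero



/-- The `n`-th increment of the simple capital process truncated at time `t`. -/
def trm (G : SimpleStrategy) (t : ℝ≥0) (n : ℕ) (ω : Omega) : ℝ :=
  G.bet n ω * (stoppedValue Xc (fun x => ((sigT G t (n + 1) x : ℝ≥0) : WithTop ℝ≥0)) ω - stoppedValue Xc (fun x => ((sigT G t n x : ℝ≥0) : WithTop ℝ≥0)) ω)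

lemma simpleCapital_eq (G : SimpleStrategy) (c : ℝ) (t : ℝ≥0) (ω : Omega) :
    simpleCapital G c t ω = c + ∑' n, trm G t n ω := rfl

lemma measurable_svT (G : SimpleStrategy) (t : ℝ≥0) (k : ℕ) :
    Measurable (stoppedValue Xc (fun x => ((sigT G t k x : ℝ≥0) : WithTop ℝ≥0))) :=
  measurable_sv (isStoppingTime_sigT G t k) (fun ω => WithTop.coe_le_coe.2 (sigT_le G t k ω))

lemma measurable_trm (G : SimpleStrategy) (t : ℝ≥0) (n : ℕ) : Measurable (trm G t n) :=
  (measurable_bet G n).mul ((measurable_svT G t (n + 1)).sub (measurable_svT G t n))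

lemma exists_trm_vanish (G : SimpleStrategy) (t : ℝ≥0) (ω : Omega) :
    ∃ M : ℕ, ∀ n, M ≤ n → (t : ℝ≥0∞) ≤ G.τ n ω := by
  have h1 : ∀ᶠ n in atTop, G.τ n ω ∈ Set.Ici (t : ℝ≥0∞) :=
    (G.tendsto_top ω).eventually_mem (Ici_mem_nhds ENNReal.coe_lt_top)
  obtain ⟨M, hM⟩ := eventually_atTop.1 h1
  exact ⟨M, fun n hn => hM n hn⟩

lemma trm_eq_zero {G : SimpleStrategy} {t : ℝ≥0} {n : ℕ} {ω : Omega}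
    (h : (t : ℝ≥0∞) ≤ G.τ n ω) : trm G t n ω = 0 := by
  have h1 : sigT G t n ω = t := sigT_eq_of_le h
  have h2 : sigT G t (n + 1) ω = t := sigT_eq_of_le (h.trans (tau_mono G (Nat.le_succ n) ω))
  show G.bet n ω * (Xc (sigT G t (n + 1) ω) ω - Xc (sigT G t n ω) ω) = 0
  rw [h1, h2, sub_self, mul_zero]

lemma summable_trm (G : SimpleStrategy) (t : ℝ≥0) (ω : Omega) :
    Summable (fun n => trm G t n ω) := by
  obtain ⟨M, hM⟩ := exists_trm_vanish G t ω
  refine summable_of_ne_finset_zero (s := Finset.range M) fun n hn => ?_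
  exact trm_eq_zero (hM n (le_of_not_gt fun h => hn (Finset.mem_range.2 h)))

lemma measurable_simpleCapital (G : SimpleStrategy) (c : ℝ) (t : ℝ≥0) :
    Measurable (simpleCapital G c t) := by
  have h1 : Measurable (fun ω => ∑' n, trm G t n ω) := by
    refine measurable_of_tendsto_metrizable' atTop
      (fun N => Finset.measurable_sum (Finset.range N) fun n _ => measurable_trm G t n) ?_
    rw [tendsto_pi_nhds]
    exact fun ω => (summable_trm G t ω).hasSum.tendsto_sum_nat
  exact measurable_const.add h1

lemma core_lintegral (P : Measure Omega) [IsProbabilityMeasure P]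
    (hmart : Martingale Xc FFfin P) (G : SimpleStrategy) (c : ℝ)
    (hnn : ∀ (u : ℝ≥0) ω, 0 ≤ simpleCapital G c u ω) (t : ℝ≥0) :
    ∫⁻ ω, ENNReal.ofReal (simpleCapital G c t ω) ∂P ≤ ENNReal.ofReal c := by
  set KN : ℕ → Omega → ℝ := fun N ω => c + ∑ n ∈ Finset.range N, trm G t n ω with hKN
  have hKeq : ∀ ω, ∀ᶠ N in atTop, KN N ω = simpleCapital G c t ω := by
    intro ω
    obtain ⟨M, hM⟩ := exists_trm_vanish G t ω
    rw [eventually_atTop]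
    refine ⟨M, fun N hN => ?_⟩
    rw [simpleCapital_eq, hKN]
    show c + ∑ n ∈ Finset.range N, trm G t n ω = c + ∑' (n : ℕ), trm G t n ω
    congr 1
    refine (tsum_eq_sum (s := Finset.range N) (f := fun n => trm G t n ω) fun n hn => ?_).symm
    refine trm_eq_zero (hM n ?_)
    exact hN.trans (le_of_not_gt fun h => hn (Finset.mem_range.2 h))
  have hnonneg : ∀ N ω, 0 ≤ KN N ω := by
    intro N ω
    have hrepr : KN N ω = simpleCapital G c (sigT G t N ω) ω := by
      rw [simpleCapital_eq, hKN]
      show c + ∑ n ∈ Finset.range N, trm G t n ω =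
        c + ∑' (n : ℕ), trm G (sigT G t N ω) n ω
      congr 1
      have hco : ((sigT G t N ω : ℝ≥0) : ℝ≥0∞) = G.τ N ω ⊓ (t : ℝ≥0∞) := coe_sigT G t N ω
      refine (Finset.sum_congr rfl fun n hn => ?_).trans
        (tsum_eq_sum (s := Finset.range N) (f := fun n => trm G (sigT G t N ω) n ω) fun n hn => ?_).symm
      · -- matching terms : n < N
        have hn' : n + 1 ≤ N := Finset.mem_range.1 hn
        have key : ∀ k, k ≤ N → sigT G (sigT G t N ω) k ω = sigT G t k ω := by
          intro k hk
          have h2 : (sigT G (sigT G t N ω) k ω : ℝ≥0∞) = (sigT G t k ω : ℝ≥0∞) := by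
            rw [coe_sigT G (sigT G t N ω) k, coe_sigT G t k, hco, ← inf_assoc,
              inf_eq_left.2 (tau_mono G hk ω)]
          exact_mod_cast h2
        show G.bet n ω * (Xc (sigT G t (n + 1) ω) ω - Xc (sigT G t n ω) ω) =
            G.bet n ω * (Xc (sigT G (sigT G t N ω) (n + 1) ω) ω -
              Xc (sigT G (sigT G t N ω) n ω) ω)
        rw [key (n + 1) hn', key n (hn'.trans' (Nat.le_succ n))]
      · -- vanishing terms : n ≥ N
        have hNn : N ≤ n := le_of_not_gt fun h => hn (Finset.mem_range.2 h)
        refine trm_eq_zero ?_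
        rw [hco]
        exact inf_le_left.trans (tau_mono G hNn ω)
    rw [hrepr]
    exact hnn _ ω
  have hint_trm : ∀ n, Integrable (trm G t n) P := fun n =>
    (incr_integral_zero P hmart G t n).1
  have hzero_trm : ∀ n, ∫ ω, trm G t n ω ∂P = 0 := fun n =>
    (incr_integral_zero P hmart G t n).2
  have hKN_int : ∀ N, Integrable (KN N) P := fun N =>
    (integrable_const c).add (integrable_finset_sum _ fun n _ => hint_trm n)
  have hKN_integral : ∀ N, ∫ ω, KN N ω ∂P = c := by
    intro N
    rw [hKN]
    rw [integral_add (integrable_const c) (integrable_finset_sum _ fun n _ => hint_trm n),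
      integral_finset_sum _ fun n _ => hint_trm n]
    simp [hzero_trm]
  have hKN_lint : ∀ N, ∫⁻ ω, ENNReal.ofReal (KN N ω) ∂P = ENNReal.ofReal c := by
    intro N
    rw [← ofReal_integral_eq_lintegral_ofReal (hKN_int N)
      (Filter.Eventually.of_forall (hnonneg N)), hKN_integral N]
  have hptsc : ∀ ω, ENNReal.ofReal (simpleCapital G c t ω) =
      liminf (fun N => ENNReal.ofReal (KN N ω)) atTop := by
    intro ω
    refine (Filter.Tendsto.liminf_eq ?_).symm
    exact Filter.Tendsto.congr'
      ((hKeq ω).mono fun N h => (congrArg ENNReal.ofReal h).symm) tendsto_const_nhds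
  calc ∫⁻ ω, ENNReal.ofReal (simpleCapital G c t ω) ∂P
      = ∫⁻ ω, liminf (fun N => ENNReal.ofReal (KN N ω)) atTop ∂P :=
        lintegral_congr hptsc
    _ ≤ liminf (fun N => ∫⁻ ω, ENNReal.ofReal (KN N ω) ∂P) atTop :=
        lintegral_liminf_le fun N =>
          (measurable_const.add (Finset.measurable_sum (Finset.range N)
            fun n _ => measurable_trm G t n)).ennreal_ofReal
    _ = ENNReal.ofReal c := by
        simp only [hKN_lint]
        exact liminf_const _

end Aux14

/-- if the coordinate process is a martingale under `P`, then `P(E) ≤ P̄(E)`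
for every event `E`. -/
theorem measure_le_outerContent (P : Measure Omega) (hprob : IsProbabilityMeasure P)
    (hmart : Martingale (fun (t : ℝ≥0) (ω : Omega) => ω t) FFfin P)
    (E : Set Omega) (hE : MeasurableSet E) :
    P E ≤ outerContent E := by
  haveI := hprob
  refine le_iInf fun S => le_iInf fun hS => ?_
  have hval_meas : ∀ k : ℕ, Measurable (S.val (k : ℝ≥0)) := fun k =>
    Measurable.ennreal_tsum fun n =>
      (measurable_simpleCapital (S.G n) (S.c n) _).ennreal_ofReal
  have hval_le : ∀ u : ℝ≥0, ∫⁻ ω, S.val u ω ∂P ≤ S.init := by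
    intro u
    calc ∫⁻ ω, S.val u ω ∂P
        = ∑' n, ∫⁻ ω, ENNReal.ofReal (simpleCapital (S.G n) (S.c n) u ω) ∂P :=
          lintegral_tsum fun n =>
            ((measurable_simpleCapital _ _ _).ennreal_ofReal).aemeasurable
      _ ≤ ∑' n, ENNReal.ofReal (S.c n) :=
          ENNReal.tsum_le_tsum fun n =>
            core_lintegral P hmart (S.G n) (S.c n) (S.nonneg n) u
      _ = S.init := rfl
  have hliminf : ∀ ω ∈ E, 1 ≤ liminf (fun k : ℕ => S.val (k : ℝ≥0) ω) atTop := by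
    intro ω hω
    refine le_trans (hS ω hω) ?_
    have hmap : (atTop : Filter ℕ).map (fun k : ℕ => (k : ℝ≥0)) ≤ (atTop : Filter ℝ≥0) :=
      tendsto_natCast_atTop_atTop
    calc liminf (fun u : ℝ≥0 => S.val u ω) atTop
        ≤ liminf (fun u : ℝ≥0 => S.val u ω)
            ((atTop : Filter ℕ).map fun k : ℕ => (k : ℝ≥0)) :=
          liminf_le_liminf_of_le hmap
      _ = liminf (fun k : ℕ => S.val (k : ℝ≥0) ω) atTop := by
          rw [Filter.liminf, Filter.liminf, Filter.map_map]
          rfl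
  calc P E = ∫⁻ ω, E.indicator (fun _ => (1 : ℝ≥0∞)) ω ∂P :=
        (lintegral_indicator_one hE).symm
    _ ≤ ∫⁻ ω, liminf (fun k : ℕ => S.val (k : ℝ≥0) ω) atTop ∂P := by
        refine lintegral_mono fun ω => ?_
        by_cases hω : ω ∈ E
        · rw [Set.indicator_of_mem hω]; exact hliminf ω hω
        · rw [Set.indicator_of_notMem hω]; exact zero_le
    _ ≤ liminf (fun k : ℕ => ∫⁻ ω, S.val (k : ℝ≥0) ω ∂P) atTop :=
        lintegral_liminf_le hval_meas
    _ ≤ S.init := by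
        refine liminf_le_of_frequently_le (Filter.Frequently.of_forall fun k => hval_le _) ?_
        isBoundedDefault
end
end

section
/- Fix h ∈ ℝ. For all reals a < μ < b there exists M ∈ ℝ such that for every x ∈ [a,b]: exp(h(x − μ) − (h²/8)(b − a)²) − 1 ≤ M·(x − μ); one may take M = ((e^{h(b−μ)} − e^{h(a−μ)})/(b − a))·exp(−(h²/8)(b − a)²). Consequently, in the game of forecasting bounded variables, for each N the product Π_{n=1}^N exp(h(x_n − μ_n) − (h²/8)(b_n − a_n)²) is a supercapital process starting from 1: there exist bets M_n, each a function of (a_1,b_1,μ_1,x_1,…,a_{n−1},b_{n−1},μ_{n−1},x_{n−1},a_n,b_n,μ_n), such that whenever a_n < μ_n < b_n and x_n ∈ [a_n,b_n] for all n, Π_{k=1}^n exp(h(x_k − μ_k) − (h²/8)(b_k − a_k)²) ≤ Π_{k=1}^{n−1} exp(h(x_k − μ_k) − (h²/8)(b_k − a_k)²) + M_n·(x_n − μ_n) for every n. -/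
open Finset

noncomputable section

open Real in

lemma Dpos (p : ℝ) (hp0 : 0 ≤ p) (hp1 : p ≤ 1) (u : ℝ) :
    0 < 1 - p + p * Real.exp u := by
  rcases eq_or_lt_of_le hp0 with h | h
  · simp [← h]
  · have := mul_pos h (Real.exp_pos u)
    linarith

lemma hoeff_key (p : ℝ) (hp0 : 0 ≤ p) (hp1 : p ≤ 1) (u : ℝ) :
    (1 - p + p * Real.exp u) * Real.exp (-(p * u)) ≤ Real.exp (u ^ 2 / 8) := by
  set φ : ℝ → ℝ := fun u => Real.log (1 - p + p * Real.exp u) - p * u with hφ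
  set φ' : ℝ → ℝ := fun u => p * Real.exp u / (1 - p + p * Real.exp u) - p with hφ'
  have hD : ∀ u : ℝ, 0 < 1 - p + p * Real.exp u := Dpos p hp0 hp1
  have hd1 : ∀ u : ℝ, HasDerivAt (fun v => 1 - p + p * Real.exp v) (p * Real.exp u) u := by
    intro u
    simpa using ((Real.hasDerivAt_exp u).const_mul p).const_add (1 - p)
  have hdφ : ∀ u : ℝ, HasDerivAt φ (φ' u) u := by
    intro u
    exact ((hd1 u).log (hD u).ne').sub ((hasDerivAt_id u).const_mul p |>.congr_deriv (by ring))
  have hdφ' : ∀ u : ℝ, HasDerivAt φ'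
      ((p * Real.exp u * (1 - p + p * Real.exp u) - p * Real.exp u * (p * Real.exp u)) /
        (1 - p + p * Real.exp u) ^ 2) u := by
    intro u
    exact (((Real.hasDerivAt_exp u).const_mul p).div (hd1 u) (hD u).ne').sub_const p
  have hbound : ∀ u : ℝ,
      (p * Real.exp u * (1 - p + p * Real.exp u) - p * Real.exp u * (p * Real.exp u)) /
        (1 - p + p * Real.exp u) ^ 2 ≤ 1 / 4 := by
    intro u
    rw [div_le_iff₀ (pow_pos (hD u) 2)]
    have hs : 0 ≤ p * Real.exp u := mul_nonneg hp0 (Real.exp_pos u).le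
    nlinarith [sq_nonneg (1 - p - p * Real.exp u)]
  -- g' = u/4 - φ' is monotone
  have hdg' : ∀ u : ℝ, HasDerivAt (fun v => v / 4 - φ' v)
      (1 / 4 - (p * Real.exp u * (1 - p + p * Real.exp u) - p * Real.exp u * (p * Real.exp u)) /
        (1 - p + p * Real.exp u) ^ 2) u := by
    intro u
    have h1 : HasDerivAt (fun v : ℝ => v / 4) (1 / 4) u := by
      simpa using (hasDerivAt_id u).div_const 4
    exact h1.sub (hdφ' u)
  have hg'mono : Monotone (fun u => u / 4 - φ' u) := by
    apply monotone_of_deriv_nonneg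
    · exact fun u => (hdg' u).differentiableAt
    · intro u
      rw [(hdg' u).deriv]
      have := hbound u
      linarith
  have hg'0 : (fun u => u / 4 - φ' u) 0 = 0 := by
    simp [hφ']
  have hφ0 : φ 0 = 0 := by simp [hφ]
  -- g = u²/8 - φ
  have key : ∀ u : ℝ, φ u ≤ u ^ 2 / 8 := by
    have hdg : ∀ u : ℝ, HasDerivAt (fun v => v ^ 2 / 8 - φ v) (u / 4 - φ' u) u := by
      intro u
      have : HasDerivAt (fun v : ℝ => v ^ 2 / 8) (u / 4) u := by
        simpa using (hasDerivAt_pow 2 u).div_const 8 |>.congr_deriv (by ring)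
      exact this.sub (hdφ u)
    have hcont : Continuous fun v => v ^ 2 / 8 - φ v :=
      Differentiable.continuous fun u => (hdg u).differentiableAt
    have hnonneg : ∀ u : ℝ, 0 ≤ u ^ 2 / 8 - φ u := by
      intro u
      have hg0 : (fun v => v ^ 2 / 8 - φ v) 0 = 0 := by simp [hφ0]
      rcases le_total 0 u with hu | hu
      · have hmono : MonotoneOn (fun v => v ^ 2 / 8 - φ v) (Set.Ici 0) := by
          apply monotoneOn_of_deriv_nonneg (convex_Ici 0) hcont.continuousOn
            (fun v _ => (hdg v).differentiableAt.differentiableWithinAt)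
          intro v hv
          rw [(hdg v).deriv]
          have : (0 : ℝ) / 4 - φ' 0 ≤ v / 4 - φ' v := hg'mono (by
            simp only [interior_Ici, Set.mem_Ioi] at hv; linarith)
          simp [hφ'] at this ⊢
          linarith
        have := hmono (Set.self_mem_Ici) (Set.mem_Ici.2 hu) hu
        rw [hg0] at this; exact this
      · have hanti : AntitoneOn (fun v => v ^ 2 / 8 - φ v) (Set.Iic 0) := by
          apply antitoneOn_of_deriv_nonpos (convex_Iic 0) hcont.continuousOn
            (fun v _ => (hdg v).differentiableAt.differentiableWithinAt)
          intro v hv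
          rw [(hdg v).deriv]
          have : v / 4 - φ' v ≤ (0 : ℝ) / 4 - φ' 0 := hg'mono (by
            simp only [interior_Iic, Set.mem_Iio] at hv; linarith)
          simp [hφ'] at this ⊢
          linarith
        have := hanti (Set.mem_Iic.2 hu) (Set.self_mem_Iic) hu
        rw [hg0] at this; exact this
    intro u; linarith [hnonneg u]
  have hlog : Real.log (1 - p + p * Real.exp u) ≤ u ^ 2 / 8 + p * u := by
    have := key u; simp only [hφ] at this; linarith
  have := Real.exp_le_exp.2 hlog
  rw [Real.exp_log (hD u)] at this
  calc (1 - p + p * Real.exp u) * Real.exp (-(p * u))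
      ≤ Real.exp (u ^ 2 / 8 + p * u) * Real.exp (-(p * u)) := by
        apply mul_le_mul_of_nonneg_right this (Real.exp_pos _).le
    _ = Real.exp (u ^ 2 / 8) := by rw [← Real.exp_add]; ring_nf
lemma hoeff_pointwise (h : ℝ) : ∀ a μ b : ℝ, a < μ → μ < b → ∀ x ∈ Set.Icc a b,
      Real.exp (h * (x - μ) - h ^ 2 / 8 * (b - a) ^ 2) - 1 ≤
        ((Real.exp (h * (b - μ)) - Real.exp (h * (a - μ))) / (b - a)) *
          Real.exp (-(h ^ 2) / 8 * (b - a) ^ 2) * (x - μ) := by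
  intro a μ b h1 h2 x hx
  obtain ⟨hxa, hxb⟩ := hx
  have hba : (0:ℝ) < b - a := by linarith
  set t : ℝ := (b - x) / (b - a) with ht
  have ht0 : 0 ≤ t := div_nonneg (by linarith) hba.le
  have ht1 : t ≤ 1 := by rw [div_le_one hba]; linarith
  have h4 : t * (b - a) = b - x := div_mul_cancel₀ _ hba.ne'
  have hxeq : t * a + (1 - t) * b = x := by linear_combination -h4
  -- convexity chord bound
  have hconv := convexOn_exp.2 (Set.mem_univ (h * (a - μ))) (Set.mem_univ (h * (b - μ)))
    ht0 (show (0:ℝ) ≤ 1 - t by linarith) (by ring)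
  simp only [smul_eq_mul] at hconv
  have harg : t * (h * (a - μ)) + (1 - t) * (h * (b - μ)) = h * (x - μ) := by
    linear_combination h * hxeq
  rw [harg] at hconv
  -- chord as affine function of x
  set S : ℝ := (Real.exp (h * (b - μ)) - Real.exp (h * (a - μ))) / (b - a) with hS
  set L0 : ℝ := ((b - μ) * Real.exp (h * (a - μ)) - (a - μ) * Real.exp (h * (b - μ))) / (b - a)
    with hL0
  have hchord : t * Real.exp (h * (a - μ)) + (1 - t) * Real.exp (h * (b - μ))
      = L0 + S * (x - μ) := by
    rw [hS, hL0, ht]; field_simp; ring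
  -- bound L0 by Hoeffding's lemma
  set p : ℝ := (μ - a) / (b - a) with hp
  set u : ℝ := h * (b - a) with hu
  have hp0 : 0 ≤ p := div_nonneg (by linarith) hba.le
  have hp1 : p ≤ 1 := by rw [hp, div_le_one hba]; linarith
  have hea : h * (a - μ) = -(p * u) := by rw [hp, hu]; field_simp; ring
  have heb : h * (b - μ) = u + -(p * u) := by rw [hp, hu]; field_simp; ring
  have hL0eq : L0 = (1 - p + p * Real.exp u) * Real.exp (-(p * u)) := by
    rw [hL0, hea, heb, Real.exp_add, hp]
    field_simp
    ring
  have hL0le : L0 ≤ Real.exp (h ^ 2 / 8 * (b - a) ^ 2) := by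
    rw [hL0eq]
    have := hoeff_key p hp0 hp1 u
    have hu2 : u ^ 2 / 8 = h ^ 2 / 8 * (b - a) ^ 2 := by rw [hu]; ring
    rwa [hu2] at this
  -- combine
  have hmain : Real.exp (h * (x - μ)) ≤ Real.exp (h ^ 2 / 8 * (b - a) ^ 2) + S * (x - μ) := by
    calc Real.exp (h * (x - μ)) ≤ L0 + S * (x - μ) := by rw [← hchord]; exact hconv
      _ ≤ _ := by linarith
  have hEpos : (0:ℝ) < Real.exp (-(h ^ 2) / 8 * (b - a) ^ 2) := Real.exp_pos _
  have hmul := mul_le_mul_of_nonneg_right hmain hEpos.le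
  have e1 : Real.exp (h * (x - μ)) * Real.exp (-(h ^ 2) / 8 * (b - a) ^ 2)
      = Real.exp (h * (x - μ) - h ^ 2 / 8 * (b - a) ^ 2) := by
    rw [← Real.exp_add]; ring_nf
  have e2 : Real.exp (h ^ 2 / 8 * (b - a) ^ 2) * Real.exp (-(h ^ 2) / 8 * (b - a) ^ 2) = 1 := by
    rw [← Real.exp_add, show h ^ 2 / 8 * (b - a) ^ 2 + -(h ^ 2) / 8 * (b - a) ^ 2 = 0 by ring,
      Real.exp_zero]
  rw [add_mul, e1, e2] at hmul
  have e3 : S * (x - μ) * Real.exp (-(h ^ 2) / 8 * (b - a) ^ 2)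
      = S * Real.exp (-(h ^ 2) / 8 * (b - a) ^ 2) * (x - μ) := by ring
  linarith [e3 ▸ hmul]

/-- Hoeffding's process. Fix `h ∈ ℝ`. First, for all `a < μ < b` and all
`x ∈ [a,b]`, `exp(h(x−μ) − (h²/8)(b−a)²) − 1 ≤ M(x−μ)` where
`M = ((e^{h(b−μ)} − e^{h(a−μ)})/(b−a))·exp(−(h²/8)(b−a)²)`. Consequently, in the game of
forecasting bounded variables, the product `Π_{n} exp(h(x_n−μ_n) − (h²/8)(b_n−a_n)²)` is a
supercapital process starting from `1`: there are bets `M_n`, each depending only on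
`(a_k,b_k,μ_k)` for `k ≤ n` and `x_k` for `k < n`, such that whenever `a_n < μ_n < b_n` and
`x_n ∈ [a_n,b_n]` for all `n`, the product over `k ≤ n` is bounded by the product over
`k < n` plus `M_n·(x_n − μ_n)`. -/
theorem hoeffding_process (h : ℝ) :
    (∀ a μ b : ℝ, a < μ → μ < b → ∀ x ∈ Set.Icc a b,
      Real.exp (h * (x - μ) - h ^ 2 / 8 * (b - a) ^ 2) - 1 ≤
        ((Real.exp (h * (b - μ)) - Real.exp (h * (a - μ))) / (b - a)) *
          Real.exp (-(h ^ 2) / 8 * (b - a) ^ 2) * (x - μ)) ∧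
    ∃ M : (ℕ → ℝ) → (ℕ → ℝ) → (ℕ → ℝ) → (ℕ → ℝ) → ℕ → ℝ,
      (∀ (a b μ x a' b' μ' x' : ℕ → ℝ) (n : ℕ),
        (∀ k ≤ n, a k = a' k ∧ b k = b' k ∧ μ k = μ' k) →
        (∀ k < n, x k = x' k) →
        M a b μ x n = M a' b' μ' x' n) ∧
      (∀ (a b μ x : ℕ → ℝ),
        (∀ n, a n < μ n ∧ μ n < b n ∧ x n ∈ Set.Icc (a n) (b n)) →
        ∀ n : ℕ,
          (∏ k ∈ Finset.range (n + 1),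
            Real.exp (h * (x k - μ k) - h ^ 2 / 8 * (b k - a k) ^ 2)) ≤
          (∏ k ∈ Finset.range n,
            Real.exp (h * (x k - μ k) - h ^ 2 / 8 * (b k - a k) ^ 2)) +
            M a b μ x n * (x n - μ n)) := by
  refine ⟨hoeff_pointwise h, ?_⟩
  refine ⟨fun a b μ x n =>
    (∏ k ∈ Finset.range n, Real.exp (h * (x k - μ k) - h ^ 2 / 8 * (b k - a k) ^ 2)) *
      (((Real.exp (h * (b n - μ n)) - Real.exp (h * (a n - μ n))) / (b n - a n)) *
        Real.exp (-(h ^ 2) / 8 * (b n - a n) ^ 2)), ?_, ?_⟩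
  · intro a b μ x a' b' μ' x' n habμ hx
    have hprod : (∏ k ∈ Finset.range n,
        Real.exp (h * (x k - μ k) - h ^ 2 / 8 * (b k - a k) ^ 2)) =
        ∏ k ∈ Finset.range n,
        Real.exp (h * (x' k - μ' k) - h ^ 2 / 8 * (b' k - a' k) ^ 2) := by
      apply Finset.prod_congr rfl
      intro k hk
      have hk' := Finset.mem_range.mp hk
      obtain ⟨ha, hb, hμ⟩ := habμ k hk'.le
      rw [ha, hb, hμ, hx k hk']
    obtain ⟨ha, hb, hμ⟩ := habμ n le_rfl
    simp only []
    rw [hprod, ha, hb, hμ]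
  · intro a b μ x hgame n
    obtain ⟨h1, h2, hx⟩ := hgame n
    have hP : (0:ℝ) < ∏ k ∈ Finset.range n,
        Real.exp (h * (x k - μ k) - h ^ 2 / 8 * (b k - a k) ^ 2) :=
      Finset.prod_pos fun k _ => Real.exp_pos _
    set P : ℝ := ∏ k ∈ Finset.range n,
        Real.exp (h * (x k - μ k) - h ^ 2 / 8 * (b k - a k) ^ 2) with hPdef
    set SE : ℝ := ((Real.exp (h * (b n - μ n)) - Real.exp (h * (a n - μ n))) / (b n - a n)) *
        Real.exp (-(h ^ 2) / 8 * (b n - a n) ^ 2) with hSE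
    have hpt := hoeff_pointwise h (a n) (μ n) (b n) h1 h2 (x n) hx
    rw [Finset.prod_range_succ]
    have hm := mul_le_mul_of_nonneg_left hpt hP.le
    have e : P * (SE * (x n - μ n)) = P * SE * (x n - μ n) := by ring
    nlinarith [hm]

end
end
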